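/- arXiv:2009.08540 — 14 statements merged into one kernel-verified Lean document; each statement's English description precedes it below -/
import Mathlib

section
/- Let λ : H → k be a partial action of a Hopf algebra H on its base field. Then the set N = {g ∈ G(H) | λ(g) = 1} is a subgroup of the group G(H) of group-like elements. -/
open TensorProduct Coalgebra HopfAlgebra

variable (k : Type*) [Field k]

/-- The convolution-type expression `h ↦ l(h₁) m(h₂)` (Sweedler notation). -/
noncomputable def pconv {H : Type*} [Ring H] [Bialgebra k H] (l m : H →ₗ[k] k) : H →ₗ[k] k :=
  (TensorProduct.lid k k).toLinearMap ∘ₗ TensorProduct.map l m ∘ₗ comul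

/-- A partial action of the Hopf (bi)algebra `H` on its base field `k`:
`l 1 = 1` and `l h * l v = l h₁ * l (h₂ * v)` for all `h v`. -/
def IsPartialAction {H : Type*} [Ring H] [Bialgebra k H] (l : H →ₗ[k] k) : Prop :=
  l 1 = 1 ∧ ∀ h v : H, l h * l v = pconv k l (l ∘ₗ LinearMap.mulRight k v) h

/-- The map `h ↦ l(h₁) h₂` (Sweedler notation). -/
noncomputable def lamL {H : Type*} [Ring H] [Bialgebra k H] (l : H →ₗ[k] k) : H →ₗ[k] H :=
  (TensorProduct.lid k H).toLinearMap ∘ₗ TensorProduct.map l LinearMap.id ∘ₗ comul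

/-- The map `h ↦ h₁ l(h₂)` (Sweedler notation); note `lamL l (lamR l h) = l(h₁) h₂ l(h₃)`. -/
noncomputable def lamR {H : Type*} [Ring H] [Bialgebra k H] (l : H →ₗ[k] k) : H →ₗ[k] H :=
  (TensorProduct.rid k H).toLinearMap ∘ₗ TensorProduct.map LinearMap.id l ∘ₗ comul

/-- A group-like element: nonzero with `Δ g = g ⊗ g`. -/
def IsGroupLikeElemLocal {H : Type*} [Ring H] [Bialgebra k H] (g : H) : Prop :=
  g ≠ 0 ∧ comul (R := k) g = g ⊗ₜ[k] g

lemma IsGroupLikeElemLocal.counit_eq_one {H : Type*} [Ring H] [Bialgebra k H] {g : H}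
    (hg : IsGroupLikeElemLocal k g) : counit (R := k) g = 1 := by
  have h := rTensor_counit_comul (R := k) g
  rw [hg.2] at h
  simp only [LinearMap.rTensor_tmul] at h
  have h2 := congrArg (TensorProduct.lid k H) h
  simp only [lid_tmul, one_smul] at h2
  have : (counit (R := k) g - 1) • g = 0 := by rw [sub_smul, h2, one_smul, sub_self]
  rcases smul_eq_zero.mp this with h3 | h3
  · exact sub_eq_zero.mp h3
  · exact absurd h3 hg.1

lemma antipode_mul_self {H : Type*} [Ring H] [HopfAlgebra k H] {g : H}
    (hg : IsGroupLikeElemLocal k g) : antipode (R := k) g * g = 1 := by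
  have h := mul_antipode_rTensor_comul_apply (R := k) (a := g)
  rw [hg.2] at h
  simp only [LinearMap.rTensor_tmul, LinearMap.mul'_apply] at h
  rw [h, hg.counit_eq_one, map_one]

lemma self_mul_antipode {H : Type*} [Ring H] [HopfAlgebra k H] {g : H}
    (hg : IsGroupLikeElemLocal k g) : g * antipode (R := k) g = 1 := by
  have h := mul_antipode_lTensor_comul_apply (R := k) (a := g)
  rw [hg.2] at h
  simp only [LinearMap.lTensor_tmul, LinearMap.mul'_apply] at h
  rw [h, hg.counit_eq_one, map_one]

/-- If `g` is group-like with `l g = 1`, then `l v = l (g * v)` for all `v`. -/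
lemma pa_shift {H : Type*} [Ring H] [Bialgebra k H] {l : H →ₗ[k] k}
    (hpa : IsPartialAction k l) {g : H} (hg : IsGroupLikeElemLocal k g) (hlg : l g = 1)
    (v : H) : l v = l (g * v) := by
  have h := hpa.2 g v
  rw [hlg, one_mul] at h
  rw [h]
  simp [pconv, hg.2, hlg]

lemma one_isGroupLike {H : Type*} [Ring H] [Bialgebra k H] :
    IsGroupLikeElemLocal k (1 : H) := by
  refine ⟨fun h => one_ne_zero (α := k) ?_,
    by rw [Bialgebra.comul_one, Algebra.TensorProduct.one_def]⟩
  rw [← Bialgebra.counit_one (R := k) (A := H), h, map_zero]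

/-- `N = {g group-like | l g = 1}` is a subgroup of the group of group-like
elements: it contains `1`, is closed under multiplication and under inverses
(the inverse of a group-like `g` being its antipode image). -/
theorem partialAction_groupLikes_subgroup {H : Type*} [Ring H] [HopfAlgebra k H]
    {l : H →ₗ[k] k} (hpa : IsPartialAction k l) :
    (IsGroupLikeElemLocal k (1 : H) ∧ l 1 = 1) ∧
    (∀ g h : H, IsGroupLikeElemLocal k g → IsGroupLikeElemLocal k h → l g = 1 → l h = 1 →
      IsGroupLikeElemLocal k (g * h) ∧ l (g * h) = 1) ∧
    (∀ g : H, IsGroupLikeElemLocal k g → l g = 1 →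
      IsGroupLikeElemLocal k (antipode (R := k) g) ∧ l (antipode (R := k) g) = 1) := by
  refine ⟨⟨one_isGroupLike k, hpa.1⟩, ?_, ?_⟩
  · intro g h hg hh hlg hlh
    refine ⟨⟨?_, ?_⟩, ?_⟩
    · intro h0
      apply hh.1
      calc h = (antipode (R := k) g * g) * h := by rw [antipode_mul_self k hg, one_mul]
        _ = antipode (R := k) g * (g * h) := by rw [mul_assoc]
        _ = 0 := by rw [h0, mul_zero]
    · rw [Bialgebra.comul_mul, hg.2, hh.2, Algebra.TensorProduct.tmul_mul_tmul]
    · rw [← pa_shift k hpa hg hlg h, hlh]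
  · intro g hg hlg
    have hS : g * antipode (R := k) g = 1 := self_mul_antipode k hg
    have hS' : antipode (R := k) g * g = 1 := antipode_mul_self k hg
    refine ⟨⟨?_, ?_⟩, ?_⟩
    · intro h0
      apply one_ne_zero (α := k)
      have : (1 : H) = 0 := by rw [← hS, h0, mul_zero]
      rw [← Bialgebra.counit_one (R := k) (A := H), this, map_zero]
    · have h1 : comul (R := k) g * comul (R := k) (antipode (R := k) g) = 1 ⊗ₜ[k] 1 := by
        rw [← Bialgebra.comul_mul, hS, Bialgebra.comul_one]
        rfl
      have h2 : comul (R := k) (antipode (R := k) g) * comul (R := k) g = 1 ⊗ₜ[k] 1 := by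
        rw [← Bialgebra.comul_mul, hS', Bialgebra.comul_one]
        rfl
      calc comul (R := k) (antipode (R := k) g)
          = comul (R := k) (antipode (R := k) g) *
              ((g ⊗ₜ[k] g) * (antipode (R := k) g ⊗ₜ[k] antipode (R := k) g)) := by
            rw [Algebra.TensorProduct.tmul_mul_tmul, hS, ← Algebra.TensorProduct.one_def,
              mul_one]
        _ = (comul (R := k) (antipode (R := k) g) * (g ⊗ₜ[k] g)) *
              (antipode (R := k) g ⊗ₜ[k] antipode (R := k) g) := by rw [mul_assoc]
        _ = antipode (R := k) g ⊗ₜ[k] antipode (R := k) g := by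
            rw [← hg.2, h2, ← Algebra.TensorProduct.one_def, one_mul]
    · rw [pa_shift k hpa hg hlg (antipode (R := k) g), hS, hpa.1]
end

section
/- Let λ : H → k be a partial action of a Hopf algebra H on k, and let g ∈ G(H) be a group-like element of prime order p with λ(g) = 0. Then λ(gⁱ) = 0 for every integer i with gcd(i, p) = 1. -/
open TensorProduct Coalgebra HopfAlgebra

variable (k : Type*) [Field k]

/-- A group-like element: nonzero with `Δ g = g ⊗ g`. -/
def IsGroupLikeElem' {H : Type*} [Ring H] [Bialgebra k H] (g : H) : Prop :=
  g ≠ 0 ∧ comul (R := k) g = g ⊗ₜ[k] g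

/-- Powers of a group-like element are group-like. -/
lemma groupLike_pow_aux {H : Type*} [Ring H] [Bialgebra k H] {g : H}
    (hg : IsGroupLikeElem' k g) (n : ℕ) : comul (R := k) (g ^ n) = (g ^ n) ⊗ₜ[k] (g ^ n) := by
  have h1 : Bialgebra.comulAlgHom k H (g ^ n) = (Bialgebra.comulAlgHom k H g) ^ n :=
    map_pow _ _ _
  rw [Bialgebra.comulAlgHom_apply, Bialgebra.comulAlgHom_apply, hg.2,
    Algebra.TensorProduct.tmul_pow] at h1
  exact h1

/-- `pconv` evaluated on a group-like element. -/
lemma pconv_apply_gl_aux {H : Type*} [Ring H] [Bialgebra k H] (l m : H →ₗ[k] k) {x : H}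
    (hx : comul (R := k) x = x ⊗ₜ[k] x) : pconv k l m x = l x * m x := by
  simp [pconv, hx]

lemma exists_mul_add_one_dvd_aux {p i : ℕ} (hp : p.Prime) (hi : Nat.Coprime i p) :
    ∃ t : ℕ, p ∣ i * t + 1 := by
  haveI : Fact p.Prime := ⟨hp⟩
  have ha : (i : ZMod p) ≠ 0 := by
    rw [Ne, ZMod.natCast_eq_zero_iff]
    intro hdvd
    have := Nat.eq_one_of_dvd_coprimes hi hdvd (dvd_refl p)
    exact hp.one_lt.ne' this
  refine ⟨(-(i : ZMod p)⁻¹).val, ?_⟩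
  rw [← ZMod.natCast_eq_zero_iff]
  push_cast
  rw [ZMod.natCast_val, ZMod.cast_id]
  field_simp
  ring

/-- if `g` is group-like of prime order `p` and `l g = 0`, then `l (g ^ i) = 0`
for every `i` coprime to `p`. -/
theorem partialAction_groupLike_primeOrder {H : Type*} [Ring H] [HopfAlgebra k H]
    {l : H →ₗ[k] k} (hpa : IsPartialAction k l) {g : H} (hg : IsGroupLikeElem' k g)
    {p : ℕ} (hp : p.Prime) (hgp : g ^ p = 1) (hg1 : g ≠ 1) (h0 : l g = 0) :
    ∀ i : ℕ, Nat.Coprime i p → l (g ^ i) = 0 := by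
  intro i hi
  by_contra hne
  have hcom := groupLike_pow_aux k hg i
  have key : ∀ v : H, l v = l (g ^ i * v) := by
    intro v
    have h2 := hpa.2 (g ^ i) v
    rw [pconv_apply_gl_aux k _ _ hcom] at h2
    simpa using mul_left_cancel₀ hne h2
  have hiter : ∀ t : ℕ, l (g ^ (i * t) * g) = l g := by
    intro t
    induction t with
    | zero => simp
    | succ t ih =>
      have hpow : g ^ (i * (t + 1)) * g = g ^ i * (g ^ (i * t) * g) := by
        rw [Nat.mul_succ, Nat.add_comm, pow_add, mul_assoc]
      rw [hpow, ← key]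
      exact ih
  obtain ⟨t, m, hm⟩ := exists_mul_add_one_dvd_aux hp hi
  have h1 : g ^ (i * t) * g = 1 := by
    have : g ^ (i * t) * g = g ^ (i * t + 1) := by rw [pow_succ]
    rw [this, hm, pow_mul, hgp, one_pow]
  have := hiter t
  rw [h1, hpa.1, h0] at this
  exact one_ne_zero this
end

section
/- Let λ : H → k be a partial action of a Hopf algebra H on k, let g, t ∈ G(H) and let x be a (g,t)-primitive element, i.e. Δ(x) = x ⊗ g + t ⊗ x. If λ(g) = λ(t), then λ(x) = 0. -/
open TensorProduct Coalgebra HopfAlgebra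

variable (k : Type*) [Field k]

/-- if `x` is `(g,t)`-primitive and `l g = l t`, then `l x = 0`. -/
theorem partialAction_skewPrimitive_eq {H : Type*} [Ring H] [HopfAlgebra k H]
    {l : H →ₗ[k] k} (hpa : IsPartialAction k l) {g t x : H}
    (hg : IsGroupLikeElem' k g) (ht : IsGroupLikeElem' k t)
    (hx : comul (R := k) x = x ⊗ₜ[k] g + t ⊗ₜ[k] x)
    (heq : l g = l t) : l x = 0 := by
  obtain ⟨h1, hlaw⟩ := hpa
  have hx1 := hlaw x 1
  have hg1 := hlaw g 1
  simp only [pconv, LinearMap.coe_comp, Function.comp_apply, LinearEquiv.coe_coe,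
    hx, hg.2, map_add, TensorProduct.map_tmul, TensorProduct.lid_tmul,
    LinearMap.mulRight_apply, mul_one, smul_eq_mul, h1] at hx1 hg1
  -- hx1 : l x = l x * l g + l t * l x,  hg1 : l g = l g * l g
  rw [← heq] at hx1
  have hsplit : l g = 0 ∨ l g - 1 = 0 := mul_eq_zero.mp (by linear_combination -hg1)
  rcases hsplit with h0 | h0
  · rw [h0] at hx1; simpa using hx1
  · have h0' : l g = 1 := by linear_combination h0
    rw [h0'] at hx1
    linear_combination -hx1
end

section
/- Let λ : H → k be a partial action of a Hopf algebra H on k, g, t ∈ G(H), and x a (g,t)-primitive element. If λ(x) = 0 and λ(t) = 1, then λ(xu) = 0 for all u ∈ H. -/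
open TensorProduct Coalgebra HopfAlgebra

variable (k : Type*) [Field k]

/-- if `x` is `(g,t)`-primitive, `l x = 0` and `l t = 1`,
then `l (x * u) = 0` for all `u`. -/
theorem partialAction_skewPrimitive_mul {H : Type*} [Ring H] [HopfAlgebra k H]
    {l : H →ₗ[k] k} (hpa : IsPartialAction k l) {g t x : H}
    (hg : IsGroupLikeElem' k g) (ht : IsGroupLikeElem' k t)
    (hx : comul (R := k) x = x ⊗ₜ[k] g + t ⊗ₜ[k] x)
    (hx0 : l x = 0) (ht1 : l t = 1) : ∀ u : H, l (x * u) = 0 := by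
  intro u
  have h := hpa.2 x u
  simp [pconv, hx, hx0, ht1, LinearMap.mulRight_apply] at h
  exact h.symm
end

section
/- Let λ : H → k be a partial action of a Hopf algebra H on k, and let g, t be commuting group-like elements with λ(g) = λ(t) = 0. For any (g,t)-primitive element x, λ(g⁻¹ t⁻¹ x) = 0. -/
open TensorProduct Coalgebra HopfAlgebra

variable (k : Type*) [Field k]

lemma pconv_eq {H : Type*} [Ring H] [Bialgebra k H] (l m : H →ₗ[k] k) (h : H) :
    pconv k l m h = TensorProduct.lid k k (TensorProduct.map l m (comul h)) := rfl

lemma gl_counit {H : Type*} [Ring H] [Bialgebra k H] {g : H} (hg : IsGroupLikeElem' k g) :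
    counit (R := k) g = 1 := by
  have h := rTensor_counit_comul (R := k) g
  rw [hg.2, LinearMap.rTensor_tmul] at h
  have h2 := congrArg (TensorProduct.lid k H) h
  simp only [TensorProduct.lid_tmul, one_smul] at h2
  have : (counit (R := k) g - 1) • g = 0 := by
    rw [sub_smul, one_smul, h2, sub_self]
  rcases smul_eq_zero.mp this with h3 | h3
  · exact sub_eq_zero.mp h3
  · exact absurd h3 hg.1

lemma gl_antipode_mul_self {H : Type*} [Ring H] [HopfAlgebra k H] {g : H}
    (hg : IsGroupLikeElem' k g) : antipode (R := k) g * g = 1 := by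
  have h := mul_antipode_rTensor_comul_apply (R := k) (a := g)
  rw [hg.2, LinearMap.rTensor_tmul, LinearMap.mul'_apply, gl_counit k hg, map_one] at h
  exact h

lemma gl_self_mul_antipode {H : Type*} [Ring H] [HopfAlgebra k H] {g : H}
    (hg : IsGroupLikeElem' k g) : g * antipode (R := k) g = 1 := by
  have h := mul_antipode_lTensor_comul_apply (R := k) (a := g)
  rw [hg.2, LinearMap.lTensor_tmul, LinearMap.mul'_apply, gl_counit k hg, map_one] at h
  exact h

lemma gl_comul_antipode {H : Type*} [Ring H] [HopfAlgebra k H] {g : H}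
    (hg : IsGroupLikeElem' k g) :
    comul (R := k) (antipode (R := k) g) =
      antipode (R := k) g ⊗ₜ[k] antipode (R := k) g := by
  set Sg := antipode (R := k) g with hSg
  have h1 : comul (R := k) Sg * (g ⊗ₜ[k] g) = 1 := by
    rw [← hg.2, ← Bialgebra.comul_mul, gl_antipode_mul_self k hg, Bialgebra.comul_one]
  have h2 : (g ⊗ₜ[k] g) * (Sg ⊗ₜ[k] Sg) = 1 := by
    rw [Algebra.TensorProduct.tmul_mul_tmul, gl_self_mul_antipode k hg]
    rfl
  calc comul (R := k) Sg = comul (R := k) Sg * ((g ⊗ₜ[k] g) * (Sg ⊗ₜ[k] Sg)) := by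
        rw [h2, mul_one]
    _ = (comul (R := k) Sg * (g ⊗ₜ[k] g)) * (Sg ⊗ₜ[k] Sg) := by rw [mul_assoc]
    _ = Sg ⊗ₜ[k] Sg := by rw [h1, one_mul]

lemma partial_action_antipode_gl {H : Type*} [Ring H] [HopfAlgebra k H]
    {l : H →ₗ[k] k} (hpa : IsPartialAction k l) {g : H} (hg : IsGroupLikeElem' k g)
    (hg0 : l g = 0) : l (antipode (R := k) g) = 0 := by
  have h := hpa.2 (antipode (R := k) g) g
  rw [pconv_eq, gl_comul_antipode k hg] at h
  simp only [TensorProduct.map_tmul, TensorProduct.lid_tmul, smul_eq_mul,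
    LinearMap.comp_apply, LinearMap.mulRight_apply, gl_antipode_mul_self k hg,
    hpa.1, mul_one, hg0, mul_zero] at h
  exact h.symm

/-- if `g, t` are commuting group-likes with `l g = l t = 0` and `x` is
`(g,t)`-primitive, then `l (g⁻¹ * t⁻¹ * x) = 0`, where `g⁻¹ = S g`, `t⁻¹ = S t`. -/
theorem partialAction_skewPrimitive_invInv {H : Type*} [Ring H] [HopfAlgebra k H]
    {l : H →ₗ[k] k} (hpa : IsPartialAction k l) {g t x : H}
    (hg : IsGroupLikeElem' k g) (ht : IsGroupLikeElem' k t) (hcomm : g * t = t * g)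
    (hx : comul (R := k) x = x ⊗ₜ[k] g + t ⊗ₜ[k] x)
    (hg0 : l g = 0) (ht0 : l t = 0) :
    l (antipode (R := k) g * antipode (R := k) t * x) = 0 := by
  set Sg := antipode (R := k) g with hSgdef
  set St := antipode (R := k) t with hStdef
  have hSgg : Sg * g = 1 := gl_antipode_mul_self k hg
  have hgSg : g * Sg = 1 := gl_self_mul_antipode k hg
  have hStt : St * t = 1 := gl_antipode_mul_self k ht
  have htSt : t * St = 1 := gl_self_mul_antipode k ht
  -- St commutes with g
  have hStg : St * g = g * St := by
    have : St * (g * t) * St = St * (t * g) * St := by rw [hcomm]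
    calc St * g = St * g * (t * St) := by rw [htSt, mul_one]
      _ = St * (g * t) * St := by rw [← mul_assoc, mul_assoc St g t]
      _ = St * (t * g) * St := by rw [hcomm]
      _ = (St * t) * (g * St) := by rw [mul_assoc, mul_assoc, mul_assoc]
      _ = g * St := by rw [hStt, one_mul]
  have hSgSt_g : Sg * St * g = St := by
    rw [mul_assoc, hStg, ← mul_assoc, hSgg, one_mul]
  have hSgSt_t : Sg * St * t = Sg := by
    rw [mul_assoc, hStt, mul_one]
  set y := Sg * St * x with hydef
  have hcomuly : comul (R := k) y = y ⊗ₜ[k] St + Sg ⊗ₜ[k] y := by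
    rw [hydef, Bialgebra.comul_mul, Bialgebra.comul_mul, gl_comul_antipode k hg,
      gl_comul_antipode k ht, hx, Algebra.TensorProduct.tmul_mul_tmul, mul_add,
      Algebra.TensorProduct.tmul_mul_tmul, Algebra.TensorProduct.tmul_mul_tmul,
      hSgSt_g, hSgSt_t]
  have hlSg : l Sg = 0 := partial_action_antipode_gl k hpa hg hg0
  have h := hpa.2 y t
  rw [pconv_eq, hcomuly, map_add] at h
  simp only [TensorProduct.map_tmul, map_add, TensorProduct.lid_tmul, smul_eq_mul,
    LinearMap.comp_apply, LinearMap.mulRight_apply, hStt, hpa.1, mul_one, hlSg,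
    zero_mul, add_zero, ht0, mul_zero] at h
  exact h.symm
end

section
/- Let λ : H → k be a partial action of a Hopf algebra H on k and define H_λ = {λ(h₁)h₂ | h ∈ H} ⊆ H (the image of the map h ↦ λ(h₁)h₂). Then H_λ is a (unital) subalgebra of H, isomorphic as an algebra to the partial smash product algebra k#H underlined, and the restriction of λ to H_λ equals the restriction of the counit ε to H_λ. -/
open TensorProduct Coalgebra HopfAlgebra

variable (k : Type*) [Field k]

section Aux

variable {k} {H : Type*} [Ring H] [Bialgebra k H] (l : H →ₗ[k] k)

lemma lamL_def (h : H) :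
    lamL k l h = TensorProduct.lid k H (TensorProduct.map l LinearMap.id (comul h)) := rfl

/-- Commute a linear map `g` past the computation `t ↦ lid (map f id t)`. -/
lemma aux_comm (f : H →ₗ[k] k) (g : H →ₗ[k] H) (t : H ⊗[k] H) :
    g (TensorProduct.lid k H (TensorProduct.map f LinearMap.id t)) =
      TensorProduct.lid k H (TensorProduct.map f g t) := by
  induction t using TensorProduct.induction_on with
  | zero => simp
  | tmul x y => simp
  | add a b ha hb => simp [ha, hb]

lemma pconv_eq_smul {l : H →ₗ[k] k} (hpa : IsPartialAction k l) (v : H) :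
    pconv k l (l ∘ₗ LinearMap.mulRight k v) = l v • l := by
  ext h
  rw [LinearMap.smul_apply, smul_eq_mul, ← hpa.2 h v, mul_comm]

/-- Key lemma ("claim B"): `M_v (lamL l h) = l v • lamL l h`, i.e.
`l(h₁) l(h₂ v) h₃ = l(v) l(h₁) h₂`. -/
lemma key_B {l : H →ₗ[k] k} (hpa : IsPartialAction k l) (v h : H) :
    lamL k (l ∘ₗ LinearMap.mulRight k v) (lamL k l h) = l v • lamL k l h := by
  set ψ : H →ₗ[k] k := l ∘ₗ LinearMap.mulRight k v with hψ
  -- the map `(x ⊗ y) ⊗ z ↦ (l x * ψ y) • z`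
  set G : (H ⊗[k] H) ⊗[k] H →ₗ[k] H :=
    (TensorProduct.lid k H).toLinearMap ∘ₗ
      TensorProduct.map ((TensorProduct.lid k k).toLinearMap ∘ₗ TensorProduct.map l ψ)
        LinearMap.id with hG
  set G₂ : H ⊗[k] (H ⊗[k] H) →ₗ[k] H :=
    G ∘ₗ (TensorProduct.assoc k H H H).symm.toLinearMap with hG₂
  have hG₂pure : ∀ (x : H) (s : H ⊗[k] H),
      G₂ (x ⊗ₜ[k] s) = l x • TensorProduct.lid k H (TensorProduct.map ψ LinearMap.id s) := by
    intro x s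
    induction s using TensorProduct.induction_on with
    | zero => simp only [tmul_zero, map_zero, smul_zero]
    | tmul y z => simp [hG₂, hG, smul_smul]
    | add a b ha hb => simp only [tmul_add, map_add, ha, hb, smul_add]
  -- step 1: move `lamL ψ` inside
  have step1 : lamL k ψ (lamL k l h) =
      TensorProduct.lid k H (TensorProduct.map l (lamL k ψ) (comul h)) :=
    aux_comm l (lamL k ψ) (comul h)
  -- step 2: rewrite through `G₂` and the left tensoring of comul
  have step2 : ∀ t : H ⊗[k] H,
      TensorProduct.lid k H (TensorProduct.map l (lamL k ψ) t) =
        G₂ (LinearMap.lTensor H (comul (R := k)) t) := by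
    intro t
    induction t using TensorProduct.induction_on with
    | zero => simp
    | tmul x w => simp [hG₂pure, lamL_def]
    | add a b ha hb => simp only [map_add, ha, hb]
  -- step 3: coassociativity
  have step3 : G₂ (LinearMap.lTensor H (comul (R := k)) (comul h)) =
      G (LinearMap.rTensor H (comul (R := k)) (comul h)) := by
    rw [← Coalgebra.coassoc_apply (R := k) h, hG₂]
    simp
  -- step 4: recognize `pconv`
  have step4 : ∀ t : H ⊗[k] H,
      G (LinearMap.rTensor H (comul (R := k)) t) =
        TensorProduct.lid k H (TensorProduct.map (pconv k l ψ) LinearMap.id t) := by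
    intro t
    induction t using TensorProduct.induction_on with
    | zero => simp
    | tmul x z => simp [hG, pconv]
    | add a b ha hb => simp only [map_add, ha, hb]
  -- step 5: `pconv k l ψ = l v • l`
  have step5 : ∀ t : H ⊗[k] H,
      TensorProduct.lid k H (TensorProduct.map (l v • l) LinearMap.id t) =
        l v • TensorProduct.lid k H (TensorProduct.map l LinearMap.id t) := by
    intro t
    induction t using TensorProduct.induction_on with
    | zero => simp
    | tmul x z => simp [smul_smul]
    | add a b ha hb => simp only [map_add, ha, hb, smul_add]
  rw [step1, step2, step3, step4, pconv_eq_smul hpa v, step5, ← lamL_def]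

/-- Multiplicativity: `(l(h₁)h₂)(l(g₁)g₂) = lamL (l(h₁)h₂ · g)`. -/
lemma lamL_mul_lamL {l : H →ₗ[k] k} (hpa : IsPartialAction k l) (h g : H) :
    lamL k l h * lamL k l g = lamL k l (lamL k l h * g) := by
  set a := lamL k l h with ha
  set rp := Coalgebra.Repr.arbitrary k g with hrp
  set ind := rp.index
  set u := rp.left
  set v := rp.right
  have heq : ∑ j ∈ ind, u j ⊗ₜ[k] v j = comul (R := k) g := rp.eq
  -- `lamL g` as a finite sum
  have hg : lamL k l g = ∑ j ∈ ind, l (u j) • v j := by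
    rw [lamL_def, ← heq]
    simp [map_sum]
  -- claim D: expanding `lamL (s * (u ⊗ v))`-style products
  have claimD : ∀ (s : H ⊗[k] H) (x y : H),
      TensorProduct.lid k H (TensorProduct.map l LinearMap.id (s * (x ⊗ₜ[k] y))) =
        TensorProduct.lid k H
          (TensorProduct.map (l ∘ₗ LinearMap.mulRight k x) LinearMap.id s) * y := by
    intro s x y
    induction s using TensorProduct.induction_on with
    | zero => simp
    | tmul p q => simp [Algebra.TensorProduct.tmul_mul_tmul, smul_mul_assoc]
    | add s₁ s₂ h₁ h₂ => simp only [add_mul, map_add, h₁, h₂]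
  -- the right-hand side as a finite sum
  have hR : lamL k l (a * g) =
      ∑ j ∈ ind, lamL k (l ∘ₗ LinearMap.mulRight k (u j)) a * v j := by
    have hc : comul (R := k) (a * g) = ∑ j ∈ ind, comul (R := k) a * (u j ⊗ₜ[k] v j) := by
      rw [Bialgebra.comul_mul, ← heq, Finset.mul_sum]
    rw [lamL_def, hc, map_sum, map_sum]
    exact Finset.sum_congr rfl fun j _ => claimD (comul a) (u j) (v j)
  -- the left-hand side
  calc a * lamL k l g = ∑ j ∈ ind, l (u j) • (a * v j) := by
        rw [hg, Finset.mul_sum]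
        exact Finset.sum_congr rfl fun j _ => (mul_smul_comm _ _ _)
    _ = ∑ j ∈ ind, (l (u j) • a) * v j := by
        simp only [smul_mul_assoc]
    _ = ∑ j ∈ ind, lamL k (l ∘ₗ LinearMap.mulRight k (u j)) a * v j := by
        refine Finset.sum_congr rfl fun j _ => ?_
        rw [ha, key_B hpa (u j) h]
    _ = lamL k l (a * g) := hR.symm

lemma l_lamL {l : H →ₗ[k] k} (hpa : IsPartialAction k l) (h : H) :
    l (lamL k l h) = l h := by
  have key : ∀ t : H ⊗[k] H,
      l (TensorProduct.lid k H (TensorProduct.map l LinearMap.id t)) =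
        TensorProduct.lid k k (TensorProduct.map l l t) := by
    intro t
    induction t using TensorProduct.induction_on with
    | zero => simp
    | tmul x y => simp
    | add a b ha hb => simp only [map_add, ha, hb]
  have h1 : l h = pconv k l l h := by
    have := hpa.2 h 1
    rwa [hpa.1, mul_one, LinearMap.mulRight_one, LinearMap.comp_id] at this
  rw [lamL_def, key (comul h), h1]
  rfl

lemma counit_lamL (h : H) : counit (R := k) (lamL k l h) = l h := by
  have key : ∀ t : H ⊗[k] H,
      counit (R := k) (TensorProduct.lid k H (TensorProduct.map l LinearMap.id t)) =
        l (TensorProduct.rid k H (LinearMap.lTensor H (counit (R := k)) t)) := by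
    intro t
    induction t using TensorProduct.induction_on with
    | zero => simp
    | tmul x y => simp [mul_comm]
    | add a b ha hb => simp only [map_add, ha, hb]
  rw [lamL_def, key (comul h), Coalgebra.lTensor_counit_comul]
  simp

lemma lamL_one {l : H →ₗ[k] k} (hpa : IsPartialAction k l) : lamL k l 1 = 1 := by
  rw [lamL_def, Bialgebra.comul_one, Algebra.TensorProduct.one_def]
  simp [hpa.1]

end Aux

/-- `H_l = {l(h₁)h₂ | h ∈ H}` (the range of `lamL`) is a unital subalgebra of
`H`; the multiplication of `H` on it corresponds to that of the partial smash product
`k # H` (underlined) via `φ(1 # l(h₁)h₂) = l(h₁)h₂`, which is encoded by the identity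
`(l(h₁)h₂)(l(g₁)g₂) = φ((1 # h)(1 # g)) = l(h₁)h₂·g ↦ λ-projected`; and `l` agrees with
the counit `ε` on `H_l`. -/
theorem range_lamL_subalgebra {H : Type*} [Ring H] [HopfAlgebra k H]
    {l : H →ₗ[k] k} (hpa : IsPartialAction k l) :
    (∃ S : Subalgebra k H, (S : Set H) = Set.range (lamL k l)) ∧
    (∀ h g : H, lamL k l h * lamL k l g = lamL k l (lamL k l h * g)) ∧
    (∀ a ∈ Set.range (lamL k l), l a = counit (R := k) a) := by
  refine ⟨?_, fun h g => lamL_mul_lamL hpa h g, ?_⟩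
  · refine ⟨Submodule.toSubalgebra (LinearMap.range (lamL k l)) ⟨1, lamL_one hpa⟩ ?_, ?_⟩
    · rintro x y ⟨h, rfl⟩ ⟨g, rfl⟩
      exact ⟨lamL k l h * g, (lamL_mul_lamL hpa h g).symm⟩
    · ext x
      simp [Submodule.mem_toSubalgebra, LinearMap.mem_range, Set.mem_range, eq_comm]
      exact ⟨fun hx => (LinearMap.mem_range.mp hx).imp fun y hy => hy.symm,
        fun ⟨y, hy⟩ => LinearMap.mem_range.mpr ⟨y, hy.symm⟩⟩
  · rintro a ⟨h, rfl⟩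
    rw [l_lamL hpa h, counit_lamL l h]
end

section
/- Let λ : H → k be a partial action of a Hopf algebra H on k. Then λ(λ(h₁)h₂) = λ(h) for all h ∈ H, and ε(λ(h₁)h₂) = λ(h) for all h ∈ H; hence λ and ε agree on the subspace H_λ = {λ(h₁)h₂ | h ∈ H}. -/
open TensorProduct Coalgebra HopfAlgebra

variable (k : Type*) [Field k]

/-- A group-like element: nonzero with `Δ g = g ⊗ g`. -/
def IsGroupLikeElement {H : Type*} [Ring H] [Bialgebra k H] (g : H) : Prop :=
  g ≠ 0 ∧ comul (R := k) g = g ⊗ₜ[k] g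

/-- `l (l(h₁)h₂) = l h` and `ε (l(h₁)h₂) = l h` for all `h`; hence `l` and
`ε` agree on `H_l = {l(h₁)h₂ | h ∈ H}`. -/
theorem lam_counit_agree_on_range {H : Type*} [Ring H] [HopfAlgebra k H]
    {l : H →ₗ[k] k} (hpa : IsPartialAction k l) :
    (∀ h : H, l (lamL k l h) = l h) ∧
    (∀ h : H, counit (R := k) (lamL k l h) = l h) ∧
    (∀ a ∈ Set.range (lamL k l), l a = counit (R := k) a) := by
  have key1 : ∀ x : H ⊗[k] H,
      l ((TensorProduct.lid k H) (TensorProduct.map l LinearMap.id x)) =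
        (TensorProduct.lid k k) (TensorProduct.map l l x) := by
    intro x
    induction x using TensorProduct.induction_on with
    | zero => simp
    | tmul a b => simp [smul_eq_mul]
    | add a b ha hb => simp_all
  have key2 : ∀ x : H ⊗[k] H,
      counit (R := k) ((TensorProduct.lid k H) (TensorProduct.map l LinearMap.id x)) =
        (TensorProduct.lid k k) (TensorProduct.map l (counit (R := k)) x) := by
    intro x
    induction x using TensorProduct.induction_on with
    | zero => simp
    | tmul a b => simp [smul_eq_mul]
    | add a b ha hb => simp_all
  have h1 : ∀ h : H, l (lamL k l h) = l h := by
    intro h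
    have := hpa.2 h 1
    rw [hpa.1, mul_one] at this
    rw [this]
    have hm : LinearMap.mulRight k (1 : H) = LinearMap.id := by
      ext x; simp
    rw [hm, LinearMap.comp_id]
    simp only [lamL, pconv, LinearMap.coe_comp, Function.comp_apply,
      LinearEquiv.coe_coe]
    exact key1 (comul h)
  have h2 : ∀ h : H, counit (R := k) (lamL k l h) = l h := by
    intro h
    simp only [lamL, LinearMap.coe_comp, Function.comp_apply, LinearEquiv.coe_coe]
    rw [key2 (comul h)]
    have : TensorProduct.map l (counit (R := k)) (comul h) =
        TensorProduct.map l LinearMap.id ((counit (R := k)).lTensor H (comul h)) := by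
      rw [LinearMap.lTensor]
      show _ = (TensorProduct.map l LinearMap.id ∘ₗ
        TensorProduct.map LinearMap.id (counit (R := k))) (comul h)
      rw [← TensorProduct.map_comp]
      simp
    rw [this, Coalgebra.lTensor_counit_comul]
    simp [smul_eq_mul]
  refine ⟨h1, h2, ?_⟩
  rintro a ⟨h, rfl⟩
  rw [h1 h, h2 h]
end

section
/- Let λ : H → k be a partial action of a Hopf algebra H on k. If λ(h₁)h₂ = h₁λ(h₂) for all h ∈ H, then λ(h₁)h₂ = λ(h₁)h₂λ(h₃) for all h ∈ H. -/
open TensorProduct Coalgebra HopfAlgebra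

variable (k : Type*) [Field k]

/-- if `l(h₁)h₂ = h₁ l(h₂)` for all `h`, then
`l(h₁)h₂ = l(h₁)h₂ l(h₃)` for all `h` (the RHS being `lamL (lamR h)`). -/
lemma lamL_apply {H : Type*} [Ring H] [Bialgebra k H] (l : H →ₗ[k] k) (x : H) {ι : Type*}
    (rx : Coalgebra.Repr k x ι) :
    lamL k l x = ∑ i ∈ rx.index, l (rx.left i) • rx.right i := by
  have : Coalgebra.comul (R := k) x = ∑ i ∈ rx.index, rx.left i ⊗ₜ[k] rx.right i := rx.eq.symm
  simp [lamL, this, map_sum]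

lemma lamR_apply {H : Type*} [Ring H] [Bialgebra k H] (l : H →ₗ[k] k) (x : H) {ι : Type*}
    (rx : Coalgebra.Repr k x ι) :
    lamR k l x = ∑ i ∈ rx.index, l (rx.right i) • rx.left i := by
  have : Coalgebra.comul (R := k) x = ∑ i ∈ rx.index, rx.left i ⊗ₜ[k] rx.right i := rx.eq.symm
  simp [lamR, this, map_sum]

lemma pconv_apply {H : Type*} [Ring H] [Bialgebra k H] (l m : H →ₗ[k] k) (x : H) {ι : Type*}
    (rx : Coalgebra.Repr k x ι) :
    pconv k l m x = ∑ i ∈ rx.index, l (rx.left i) * m (rx.right i) := by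
  have : Coalgebra.comul (R := k) x = ∑ i ∈ rx.index, rx.left i ⊗ₜ[k] rx.right i := rx.eq.symm
  simp [pconv, this, map_sum, smul_eq_mul]

/-- STATEMENT 12 proof. -/
theorem lamL_eq_lamR_implies {H : Type*} [Ring H] [HopfAlgebra k H]
    {l : H →ₗ[k] k} (hpa : IsPartialAction k l)
    (hsym : ∀ h : H, lamL k l h = lamR k l h) :
    ∀ h : H, lamL k l h = lamL k l (lamR k l h) := by
  -- first: l = pconv l l
  have hll : ∀ x : H, l x = pconv k l l x := by
    intro x
    have := hpa.2 x 1
    rwa [hpa.1, mul_one, LinearMap.mulRight_one, LinearMap.comp_id] at this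
  intro h
  set r : Coalgebra.Repr k h (H × H) := ℛ k h with hr
  set a₁ : (i : H × H) → Coalgebra.Repr k (r.left i) (H × H) := fun i => ℛ k (r.left i) with ha₁
  set a₂ : (i : H × H) → Coalgebra.Repr k (r.right i) (H × H) := fun i => ℛ k (r.right i) with ha₂
  have key := Coalgebra.sum_tmul_tmul_eq r a₁ a₂
  -- the trilinear functional x ⊗ (y ⊗ z) ↦ (l y * l z) • x
  set Φ : H ⊗[k] (H ⊗[k] H) →ₗ[k] H :=
    (TensorProduct.rid k H).toLinearMap ∘ₗ
      TensorProduct.map LinearMap.id (LinearMap.mul' k k ∘ₗ TensorProduct.map l l) with hΦ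
  have hΦ_apply : ∀ x y z : H, Φ (x ⊗ₜ[k] (y ⊗ₜ[k] z)) = (l y * l z) • x := by
    intro x y z
    simp [hΦ, TensorProduct.smul_tmul', smul_eq_mul]
  have key2 := congrArg Φ key
  rw [map_sum, map_sum] at key2
  simp only [map_sum, hΦ_apply] at key2
  -- compute the left side: Φ(LHS of key) = lamL (lamR h)
  have hL : lamL k l (lamR k l h) =
      ∑ i ∈ r.index, ∑ j ∈ (a₁ i).index,
        (l ((a₁ i).right j) * l (r.right i)) • (a₁ i).left j := by
    rw [lamR_apply k l h r, map_sum]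
    refine Finset.sum_congr rfl fun i _ => ?_
    rw [map_smul, hsym (r.left i), lamR_apply k l (r.left i) (a₁ i), Finset.smul_sum]
    refine Finset.sum_congr rfl fun j _ => ?_
    rw [smul_smul, mul_comm]
  -- compute the right side: Φ(RHS of key) = lamR h
  have hR : (∑ i ∈ r.index, ∑ j ∈ (a₂ i).index,
      (l ((a₂ i).left j) * l ((a₂ i).right j)) • r.left i) = lamR k l h := by
    rw [lamR_apply k l h r]
    refine Finset.sum_congr rfl fun i _ => ?_
    rw [← Finset.sum_smul, ← pconv_apply k l l (r.right i) (a₂ i), ← hll]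
  rw [hL, key2, hR, ← hsym h]
end

section
/- Let λ : H → k be a partial action of a finite-dimensional Hopf algebra H on k. Suppose x ∈ H is a non-trivial (g,h)-primitive element (i.e. Δ(x) = x ⊗ g + h ⊗ x and x ∉ k·(g − h)) with λ(g) = 0 and λ(h) = 1. Then λ(x₁)x₂ ≠ λ(x₁)x₂λ(x₃); consequently H_λ is not a Hopf subalgebra of H. -/
open TensorProduct Coalgebra HopfAlgebra

variable (k : Type*) [Field k]

/-- if `x` is a non-trivial `(g,h)`-primitive element with `l g = 0` and
`l h = 1`, then `l(x₁)x₂ ≠ l(x₁)x₂ l(x₃)`; consequently `H_l` is not a Hopf subalgebra of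
`H` (not simultaneously closed under comultiplication and antipode). -/
theorem range_lamL_not_hopfSubalgebra {H : Type*} [Ring H] [HopfAlgebra k H]
    [FiniteDimensional k H] {l : H →ₗ[k] k} (hpa : IsPartialAction k l) {g h x : H}
    (hg : IsGroupLikeElem' k g) (hh : IsGroupLikeElem' k h)
    (hx : comul (R := k) x = x ⊗ₜ[k] g + h ⊗ₜ[k] x)
    (hxnt : x ∉ Submodule.span k ({g - h} : Set H))
    (hg0 : l g = 0) (hh1 : l h = 1) :
    lamL k l x ≠ lamL k l (lamR k l x) ∧
    ¬ ((∀ a ∈ LinearMap.range (lamL k l),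
          comul (R := k) a ∈ LinearMap.range
            (TensorProduct.map (LinearMap.range (lamL k l)).subtype
              (LinearMap.range (lamL k l)).subtype)) ∧
        (∀ a ∈ LinearMap.range (lamL k l),
          antipode (R := k) a ∈ LinearMap.range (lamL k l))) := by
  obtain ⟨hl1, hlpa⟩ := hpa
  -- the convolution square of `l` is `l`
  have hconv : ∀ u : H,
      (TensorProduct.lid k k) (TensorProduct.map l l (comul (R := k) u)) = l u := by
    intro u
    have h1 := hlpa u 1
    rw [hl1, mul_one] at h1
    rw [pconv, LinearMap.mulRight_one, LinearMap.comp_id] at h1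
    simpa [LinearMap.comp_apply] using h1.symm
  -- `l ∘ lamL = l`
  have keyT : ∀ t : H ⊗[k] H,
      l ((TensorProduct.lid k H) (TensorProduct.map l LinearMap.id t)) =
        (TensorProduct.lid k k) (TensorProduct.map l l t) := by
    intro t
    induction t using TensorProduct.induction_on with
    | zero => simp
    | tmul a b => simp [smul_eq_mul]
    | add t1 t2 h1 h2 => simp only [map_add, h1, h2]
  have hlamL_l : ∀ u : H, l (lamL k l u) = l u := by
    intro u
    rw [lamL]
    simp only [LinearMap.comp_apply, LinearEquiv.coe_toLinearMap]
    rw [keyT, hconv]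
  -- `counit ∘ lamL = l`
  have keyC : ∀ t : H ⊗[k] H,
      counit (R := k) ((TensorProduct.lid k H) (TensorProduct.map l LinearMap.id t)) =
        l ((TensorProduct.rid k H) ((counit (R := k) (A := H)).lTensor H t)) := by
    intro t
    induction t using TensorProduct.induction_on with
    | zero => simp
    | tmul a b => simp [smul_eq_mul, mul_comm]
    | add t1 t2 h1 h2 => simp only [map_add, h1, h2]
  have hcounit_lamL : ∀ u : H, counit (R := k) (lamL k l u) = l u := by
    intro u
    rw [lamL]
    simp only [LinearMap.comp_apply, LinearEquiv.coe_toLinearMap]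
    rw [keyC, Coalgebra.lTensor_counit_comul]
    simp
  -- counit of group-likes is 1
  have hcounit_gl : ∀ a : H, a ≠ 0 → comul (R := k) a = a ⊗ₜ[k] a →
      counit (R := k) a = 1 := by
    intro a ha hca
    have h1 := Coalgebra.rTensor_counit_comul (R := k) a
    rw [hca] at h1
    simp only [LinearMap.rTensor_tmul] at h1
    have h2 := congrArg (TensorProduct.lid k H) h1
    simp only [TensorProduct.lid_tmul, one_smul] at h2
    have h3 : (counit (R := k) a - 1) • a = 0 := by rw [sub_smul, h2, one_smul, sub_self]
    rcases smul_eq_zero.mp h3 with h4 | h4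
    · exact sub_eq_zero.mp h4
    · exact absurd h4 ha
  have hεg : counit (R := k) g = 1 := hcounit_gl g hg.1 hg.2
  have hεh : counit (R := k) h = 1 := hcounit_gl h hh.1 hh.2
  -- counit of x is 0
  have hεx : counit (R := k) x = 0 := by
    have h1 := Coalgebra.rTensor_counit_comul (R := k) x
    rw [hx] at h1
    simp only [map_add, LinearMap.rTensor_tmul, hεh] at h1
    have h2 : counit (R := k) x ⊗ₜ[k] g = (0 : k ⊗[k] H) := by
      have := add_eq_right.mp h1
      exact this
    have h3 := congrArg (TensorProduct.lid k H) h2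
    simp only [TensorProduct.lid_tmul, map_zero] at h3
    rcases smul_eq_zero.mp h3 with h4 | h4
    · exact h4
    · exact absurd h4 hg.1
  -- explicit values of lamL and lamR
  have hlamL_x : lamL k l x = l x • g + x := by
    rw [lamL]
    simp only [LinearMap.comp_apply, LinearEquiv.coe_toLinearMap, hx, map_add,
      TensorProduct.map_tmul, LinearMap.id_coe, id_eq, TensorProduct.lid_tmul, hh1, one_smul]
  have hlamL_h : lamL k l h = h := by
    rw [lamL]
    simp [hh.2, hh1]
  have hlamR_x : lamR k l x = l x • h := by
    rw [lamR]
    simp [hx, hg0]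
  -- part 1
  have hne : lamL k l x ≠ lamL k l (lamR k l x) := by
    intro heq
    rw [hlamL_x, hlamR_x, map_smul, hlamL_h] at heq
    apply hxnt
    rw [Submodule.mem_span_singleton]
    refine ⟨-(l x), ?_⟩
    have hx' : x = l x • h - l x • g := by
      rw [eq_sub_iff_add_eq, add_comm]; exact heq
    have h3 : -(l x) • (g - h) = l x • h - l x • g := by module
    rw [h3]; exact hx'.symm
  refine ⟨hne, ?_⟩
  rintro ⟨hΔ, -⟩
  -- g is not in the range of lamL
  have hgR : g ∉ LinearMap.range (lamL k l) := by
    rintro ⟨u, hu⟩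
    have h1 : (0 : k) = l u := by rw [← hg0, ← hu, hlamL_l]
    have h2 : (1 : k) = l u := by rw [← hεg, ← hu, hcounit_lamL]
    exact one_ne_zero (h2.trans h1.symm)
  -- a functional vanishing on the range with φ g = 1
  obtain ⟨φ, hφR, hφg⟩ : ∃ φ : Module.Dual k H,
      (∀ r ∈ LinearMap.range (lamL k l), φ r = 0) ∧ φ g = 1 := by
    have hne' : ¬ ∀ φ ∈ (LinearMap.range (lamL k l)).dualAnnihilator, φ g = 0 := fun hf =>
      hgR ((Subspace.forall_mem_dualAnnihilator_apply_eq_zero_iff _ g).mp hf)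
    push_neg at hne'
    obtain ⟨φ₀, hmem, hne0⟩ := hne'
    refine ⟨(φ₀ g)⁻¹ • φ₀, fun r hr => ?_, ?_⟩
    · rw [LinearMap.smul_apply, (Submodule.mem_dualAnnihilator φ₀).mp hmem r hr, smul_zero]
    · simp [inv_mul_cancel₀ hne0]
  -- apply (id ⊗ φ) to Δ(lamL x)
  obtain ⟨t, ht⟩ := hΔ (lamL k l x) ⟨x, rfl⟩
  have hkill0 : ∀ s : (LinearMap.range (lamL k l)) ⊗[k] (LinearMap.range (lamL k l)),
      (TensorProduct.rid k H) ((φ.lTensor H)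
      (TensorProduct.map (LinearMap.range (lamL k l)).subtype
        (LinearMap.range (lamL k l)).subtype s)) = 0 := by
    intro s
    induction s using TensorProduct.induction_on with
    | zero => simp
    | tmul a b => simp [hφR b.1 b.2]
    | add t1 t2 h1 h2 => simp only [map_add, h1, h2, add_zero]
  have hkill := hkill0 t
  rw [ht] at hkill
  have h0 : l x • g + (x + φ x • h) = 0 := by
    rw [hlamL_x, map_add, map_smul, hg.2, hx] at hkill
    simpa [hφg] using hkill
  -- apply counit to get φ x = - l x
  have hc := congrArg (counit (R := k)) h0
  simp only [map_add, map_smul, hεg, hεh, hεx, smul_eq_mul, mul_one, zero_add, map_zero] at hc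
  have hφx : φ x = -(l x) := by linear_combination hc
  rw [hφx] at h0
  -- conclude
  apply hxnt
  rw [Submodule.mem_span_singleton]
  refine ⟨-(l x), ?_⟩
  have h1 : x + -(l x) • h = -(l x • g) := eq_neg_of_add_eq_zero_right h0
  have h2 : x = -(l x • g) - -(l x) • h := eq_sub_of_add_eq h1
  have h3 : -(l x) • (g - h) = -(l x • g) - -(l x) • h := by module
  rw [h3]; exact h2.symm
end

section
/- For a group-like element x = g of a Hopf algebra H and a partial action λ : H → k, one has λ(g₁)g₂ = λ(g₁)g₂λ(g₃); moreover, if x is a (g,h)-primitive element with λ(g) = λ(h), then λ(x₁)x₂ = λ(x₁)x₂λ(x₃). -/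
open TensorProduct Coalgebra HopfAlgebra

variable (k : Type*) [Field k]

/-- for group-like `g`, `l(g₁)g₂ = l(g₁)g₂ l(g₃)`; and for a
`(g,h)`-primitive `x` with `l g = l h`, `l(x₁)x₂ = l(x₁)x₂ l(x₃)`
(the right-hand sides being `lamL ∘ lamR`). -/
theorem lamL_eq_on_groupLike_and_primitive {H : Type*} [Ring H] [HopfAlgebra k H]
    {l : H →ₗ[k] k} (hpa : IsPartialAction k l) :
    (∀ g : H, IsGroupLikeElem' k g → lamL k l g = lamL k l (lamR k l g)) ∧
    (∀ g h x : H, IsGroupLikeElem' k g → IsGroupLikeElem' k h →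
      comul (R := k) x = x ⊗ₜ[k] g + h ⊗ₜ[k] x → l g = l h →
      lamL k l x = lamL k l (lamR k l x)) := by
  obtain ⟨h1, hrel⟩ := hpa
  have hgrel : ∀ g : H, comul (R := k) g = g ⊗ₜ[k] g → ∀ v : H, l g * l v = l g * l (g * v) := by
    intro g hcg v
    have := hrel g v
    simpa [pconv, hcg] using this
  have hsq : ∀ g : H, comul (R := k) g = g ⊗ₜ[k] g → l g * l g = l g := by
    intro g hcg
    have := hgrel g hcg 1
    simpa [h1] using this.symm
  have hlamLg : ∀ g : H, comul (R := k) g = g ⊗ₜ[k] g → lamL k l g = l g • g := by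
    intro g hcg; simp [lamL, hcg]
  have hlamRg : ∀ g : H, comul (R := k) g = g ⊗ₜ[k] g → lamR k l g = l g • g := by
    intro g hcg; simp [lamR, hcg]
  constructor
  · intro g hg
    obtain ⟨-, hcg⟩ := hg
    rw [hlamRg g hcg, map_smul, hlamLg g hcg, smul_smul, hsq g hcg]
  · intro g h x hg hh hcx hgh
    obtain ⟨hg0, hcg⟩ := hg
    obtain ⟨hh0, hch⟩ := hh
    have hxrel : ∀ v : H, l x * l v = l x * l (g * v) + l h * l (x * v) := by
      intro v
      have := hrel x v
      simpa [pconv, hcx] using this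
    have hlx : l x = 0 := by
      have hcases : l g = 0 ∨ l g = 1 := by
        have hs := hsq g hcg
        rcases mul_eq_zero.mp (show l g * (l g - 1) = 0 by
            rw [mul_sub, mul_one, hs, sub_self]) with h' | h'
        · exact Or.inl h'
        · exact Or.inr (sub_eq_zero.mp h')
      rcases hcases with ha | ha
      · have := hxrel 1
        simp [h1, ha, ← hgh] at this
        exact this
      · have hgv : ∀ v : H, l (g * v) = l v := by
          intro v
          have := hgrel g hcg v
          rw [ha, one_mul, one_mul] at this
          exact this.symm
        have hxv : ∀ v : H, l (x * v) = 0 := by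
          intro v
          have := hxrel v
          rw [hgv v, ← hgh, ha, one_mul] at this
          exact left_eq_add.mp this
        simpa [h1] using hxv 1
    have hlamLx : lamL k l x = l x • g + l h • x := by simp [lamL, hcx]
    have hlamRx : lamR k l x = l g • x + l x • h := by simp [lamR, hcx]
    rw [hlamRx, map_add, map_smul, map_smul, hlamLx, hlamLg h hch, hlx]
    simp only [zero_smul, add_zero, zero_add, smul_add, smul_smul]
    rw [hgh, hsq h hch]
    simp
end

section
/- Let G be a group and N a subgroup of G. Then the linear map λ_N : kG → k defined on the basis G by λ_N(g) = 1 if g ∈ N and λ_N(g) = 0 otherwise is a partial action of the group Hopf algebra kG on k. Conversely, every partial action λ of kG on k is of this form: N = {g ∈ G | λ(g) = 1} is a subgroup and λ = λ_N. -/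
open TensorProduct Coalgebra HopfAlgebra

variable (k : Type*) [Field k]

open scoped Classical in
/-- for the group Hopf algebra `kG` (presented abstractly as a Hopf algebra
`A` with a basis `B` indexed by `G` consisting of group-like elements and compatible with
the group structure), partial actions on `k` correspond exactly to subgroups of `G`:
the indicator functional `λ_N` of any subgroup `N` is a partial action, and conversely
every partial action `l` arises this way, with `N = {g | l (B g) = 1}` a subgroup. -/
theorem partialActions_groupAlgebra {G : Type*} [Group G] {A : Type*} [Ring A]
    [HopfAlgebra k A] (B : Module.Basis G k A) (hB1 : B 1 = 1)
    (hBmul : ∀ g h : G, B (g * h) = B g * B h)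
    (hBc : ∀ g : G, comul (R := k) (B g) = B g ⊗ₜ[k] B g) :
    (∀ N : Subgroup G,
      IsPartialAction k (B.constr k fun g => if g ∈ N then (1 : k) else 0)) ∧
    (∀ l : A →ₗ[k] k, IsPartialAction k l →
      ∃ N : Subgroup G, ((N : Set G) = {g : G | l (B g) = 1}) ∧
        l = B.constr k fun g => if g ∈ N then (1 : k) else 0) := by
  classical
  have hpc : ∀ (l m : A →ₗ[k] k) (g : G), pconv k l m (B g) = l (B g) * m (B g) := by
    intro l m g
    simp [pconv, hBc g]
  have hpart : ∀ l : A →ₗ[k] k,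
      (∀ g g' : G, l (B g) * l (B g') = l (B g) * l (B (g * g'))) →
      ∀ h v : A, l h * l v = pconv k l (l ∘ₗ LinearMap.mulRight k v) h := by
    intro l key h v
    have step : ∀ g : G, (l (B g)) • l = (l (B g)) • (l ∘ₗ LinearMap.mulLeft k (B g)) := by
      intro g
      apply B.ext
      intro g'
      simp only [LinearMap.smul_apply, LinearMap.comp_apply, LinearMap.mulLeft_apply,
        smul_eq_mul, ← hBmul]
      exact key g g'
    have main : (l v) • l = pconv k l (l ∘ₗ LinearMap.mulRight k v) := by
      apply B.ext
      intro g
      rw [hpc]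
      simp only [LinearMap.smul_apply, smul_eq_mul, LinearMap.comp_apply,
        LinearMap.mulRight_apply]
      have h3 := congrArg (fun f : A →ₗ[k] k => f v) (step g)
      simp only [LinearMap.smul_apply, LinearMap.comp_apply, LinearMap.mulLeft_apply,
        smul_eq_mul] at h3
      rw [mul_comm (l v) (l (B g))]
      exact h3
    calc l h * l v = (l v • l) h := by rw [LinearMap.smul_apply, smul_eq_mul, mul_comm]
    _ = _ := by rw [main]
  constructor
  · intro N
    refine ⟨?_, ?_⟩
    · rw [← hB1, B.constr_basis]
      exact if_pos N.one_mem
    · apply hpart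
      intro g g'
      rw [B.constr_basis, B.constr_basis, B.constr_basis]
      by_cases hg : g ∈ N
      · by_cases hg' : g' ∈ N
        · simp [hg, hg', N.mul_mem hg hg']
        · have hgg : g * g' ∉ N := fun h => hg' (by simpa using N.mul_mem (N.inv_mem hg) h)
          simp [hg, hg', hgg]
      · simp [hg]
  · intro l hl
    have key : ∀ g g' : G, l (B g) * l (B g') = l (B g) * l (B (g * g')) := by
      intro g g'
      rw [hBmul]
      have h4 := hl.2 (B g) (B g')
      rw [hpc] at h4
      simpa using h4
    have hone : l (B 1) = 1 := by rw [hB1]; exact hl.1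
    have hinv : ∀ g : G, l (B g⁻¹) = l (B g) := by
      intro g
      have h1 := key g g⁻¹
      have h2 := key g⁻¹ g
      rw [mul_inv_cancel, hone, mul_one] at h1
      rw [inv_mul_cancel, hone, mul_one] at h2
      rw [mul_comm] at h2
      rw [h2] at h1
      exact h1
    have idem : ∀ g : G, l (B g) = 0 ∨ l (B g) = 1 := by
      intro g
      have h1 := key g g⁻¹
      rw [mul_inv_cancel, hone, mul_one, hinv] at h1
      have h2 : l (B g) * (l (B g) - 1) = 0 := by linear_combination h1
      rcases mul_eq_zero.mp h2 with h | h
      · exact Or.inl h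
      · exact Or.inr (by linear_combination h)
    refine ⟨{ carrier := {g | l (B g) = 1},
              one_mem' := hone,
              mul_mem' := ?_,
              inv_mem' := ?_ }, rfl, ?_⟩
    · intro a b ha hb
      have h5 := key a b
      rw [ha, hb] at h5
      simpa using h5.symm
    · intro a ha
      show l (B a⁻¹) = 1
      rw [hinv]; exact ha
    · apply B.ext
      intro g
      rw [B.constr_basis]
      simp only [Subgroup.mem_mk, Submonoid.mem_mk, Subsemigroup.mem_mk, Set.mem_setOf_eq]
      by_cases hg : l (B g) = 1
      · rw [if_pos (show _ from hg), hg]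
      · rw [if_neg (show ¬ _ from hg)]
        rcases idem g with h0 | h1
        · exact h0
        · exact absurd h1 hg
end

section
/- Let H and L be Hopf algebras over k, and let λ_H : H → k and λ_L : L → k be partial actions of H and L on k. Then the linear map λ : H ⊗ L → k, λ(h ⊗ l) = λ_H(h)λ_L(l), is a partial action of the tensor product Hopf algebra H ⊗ L on k. -/
open TensorProduct Coalgebra HopfAlgebra

variable (k : Type*) [Field k]

universe u

/-- `pconv` computed via a chosen representation of `comul h`. -/
lemma pconv_repr {H : Type u} [Ring H] [Bialgebra k H] (l m : H →ₗ[k] k) (h : H)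
    {ι : Type*} (r : Coalgebra.Repr k h ι) :
    pconv k l m h = ∑ i ∈ r.index, l (r.left i) * m (r.right i) := by
  simp only [pconv, LinearMap.comp_apply, ← r.eq, map_sum, TensorProduct.map_tmul,
    LinearEquiv.coe_coe, TensorProduct.lid_tmul, smul_eq_mul]

/-- A representation of `comul (h ⊗ₜ l)` built from representations in each factor. -/
noncomputable def tmulRepr {H L : Type u} [Ring H] [Ring L]
    [Bialgebra k H] [Bialgebra k L] (h : H) (l : L)
    {ι κ : Type*} (rh : Coalgebra.Repr k h ι) (rl : Coalgebra.Repr k l κ) :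
    Coalgebra.Repr k (h ⊗ₜ[k] l) (ι × κ) where
  index := rh.index ×ˢ rl.index
  left p := rh.left p.1 ⊗ₜ[k] rl.left p.2
  right p := rh.right p.1 ⊗ₜ[k] rl.right p.2
  eq := by
    rw [Finset.sum_product]
    show _ = Coalgebra.comul (h ⊗ₜ[k] l)
    rw [TensorProduct.comul_tmul,
      ← rh.eq, ← rl.eq, TensorProduct.sum_tmul]
    rw [map_sum]
    refine Finset.sum_congr rfl fun i _ => ?_
    rw [TensorProduct.tmul_sum, map_sum]
    refine Finset.sum_congr rfl fun j _ => ?_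
    exact (TensorProduct.tensorTensorTensorComm_tmul (R := k) (rh.left i) (rh.right i)
      (rl.left j) (rl.right j)).symm

/-- if `lH` and `lL` are partial actions of `H` and `L` on `k`, then
`h ⊗ l ↦ lH h * lL l` is a partial action of the tensor product Hopf algebra `H ⊗ L`. -/
theorem partialAction_tensor {k H L : Type u} [Field k] [Ring H] [Ring L]
    [HopfAlgebra k H] [HopfAlgebra k L] (lH : H →ₗ[k] k) (lL : L →ₗ[k] k)
    (h1 : IsPartialAction k lH) (h2 : IsPartialAction k lL) :
    IsPartialAction k ((TensorProduct.lid k k).toLinearMap ∘ₗ TensorProduct.map lH lL) := by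
  obtain ⟨hH1, hHm⟩ := h1
  obtain ⟨hL1, hLm⟩ := h2
  set lam := (TensorProduct.lid k k).toLinearMap ∘ₗ TensorProduct.map lH lL with hlam
  have lam_tmul : ∀ (a : H) (b : L), lam (a ⊗ₜ[k] b) = lH a * lL b := by
    intro a b
    simp [hlam, smul_eq_mul]
  constructor
  · rw [Algebra.TensorProduct.one_def, lam_tmul, hH1, hL1, one_mul]
  · intro u v
    induction u using TensorProduct.induction_on with
    | zero => simp
    | add x y hx hy => simp only [map_add, add_mul, hx, hy]
    | tmul h l =>
      set rh := Coalgebra.Repr.arbitrary k h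
      set rl := Coalgebra.Repr.arbitrary k l
      rw [pconv_repr k lam _ _ (tmulRepr k h l rh rl)]
      simp only [tmulRepr]
      induction v using TensorProduct.induction_on with
      | zero => simp
      | add x y hx hy =>
        simp only [map_add, mul_add, hx, hy, ← Finset.sum_add_distrib]
        refine Finset.sum_congr rfl fun p _ => ?_
        simp [LinearMap.mulRight_apply, mul_add]
      | tmul h' l' =>
        have key : ∀ p ∈ rh.index ×ˢ rl.index,
            lam (rh.left p.1 ⊗ₜ[k] rl.left p.2) *
              (lam ∘ₗ LinearMap.mulRight k (h' ⊗ₜ[k] l')) (rh.right p.1 ⊗ₜ[k] rl.right p.2) =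
            (lH (rh.left p.1) * lH (rh.right p.1 * h')) *
              (lL (rl.left p.2) * lL (rl.right p.2 * l')) := by
          intro p _
          simp only [LinearMap.comp_apply, LinearMap.mulRight_apply,
            Algebra.TensorProduct.tmul_mul_tmul, lam_tmul]
          ring
        rw [Finset.sum_congr rfl key, Finset.sum_product]
        have : ∑ i ∈ rh.index, ∑ j ∈ rl.index,
            (lH (rh.left i) * lH (rh.right i * h')) * (lL (rl.left j) * lL (rl.right j * l')) =
            (∑ i ∈ rh.index, lH (rh.left i) * lH (rh.right i * h')) *
            (∑ j ∈ rl.index, lL (rl.left j) * lL (rl.right j * l')) := by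
          rw [Finset.sum_mul_sum]
        rw [this]
        have eH : ∑ i ∈ rh.index, lH (rh.left i) * lH (rh.right i * h') = lH h * lH h' := by
          rw [hHm h h', pconv_repr k lH _ _ rh]
          simp [LinearMap.mulRight_apply]
        have eL : ∑ j ∈ rl.index, lL (rl.left j) * lL (rl.right j * l') = lL l * lL l' := by
          rw [hLm l l', pconv_repr k lL _ _ rl]
          simp [LinearMap.mulRight_apply]
        rw [eH, eL, lam_tmul, lam_tmul]
        ring
end

section
/- Every Hopf algebra H is a λ-Hopf algebra: there exist a Hopf algebra L strictly containing (a copy of) H and a partial action λ : L → k with λ ≠ ε_L such that L_λ ≅ H as Hopf algebras. Concretely, for any nontrivial group G, take L = H ⊗ kG and λ = ε_H ⊗ λ_{{1_G}}; then L_λ = H ⊗ k·1_G ≅ H. -/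
open TensorProduct Coalgebra HopfAlgebra

variable (k : Type*) [Field k]

universe u

set_option maxHeartbeats 1000000 in
set_option synthInstance.maxHeartbeats 1000000 in
open scoped Classical in
/-- every Hopf algebra `H` is a λ-Hopf algebra. Concretely, for any
nontrivial group `G` with group Hopf algebra `A = kG` (presented via a group-like basis
`B`), the functional `λ = ε_H ⊗ λ_{1}` on `L = H ⊗ kG` is a partial action distinct from
the counit, and `L_λ`, the range of `lamL`, is the image of the injective Hopf-algebra
embedding `h ↦ h ⊗ 1` of `H` into `L`; hence `L_λ ≅ H` as Hopf algebras. -/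
theorem every_hopfAlgebra_is_lambdaHopf {k H G A : Type u} [Field k] [Ring H]
    [HopfAlgebra k H] [Group G] [Nontrivial G] [Ring A] [HopfAlgebra k A]
    (B : Module.Basis G k A) (hB1 : B 1 = 1) (hBmul : ∀ g h : G, B (g * h) = B g * B h)
    (hBc : ∀ g : G, comul (R := k) (B g) = B g ⊗ₜ[k] B g) :
    ∀ l : H ⊗[k] A →ₗ[k] k,
      l = (TensorProduct.lid k k).toLinearMap ∘ₗ
        TensorProduct.map (counit (R := k))
          (B.constr k fun g => if g = (1 : G) then (1 : k) else 0) →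
      IsPartialAction k l ∧ l ≠ counit (R := k) ∧
      ∃ f : H →ₗ[k] H ⊗[k] A,
        Function.Injective f ∧ f 1 = 1 ∧ (∀ a b : H, f (a * b) = f a * f b) ∧
        (∀ a : H, comul (R := k) (f a) = TensorProduct.map f f (comul (R := k) a)) ∧
        (∀ a : H, counit (R := k) (f a) = counit (R := k) a) ∧
        LinearMap.range f = LinearMap.range (lamL k l) := by
  classical
  intro l hl
  have hBc1 : comul (R := k) (1 : A) = (1 : A) ⊗ₜ[k] (1 : A) := by rw [← hB1, hBc]
  set lam1 : A →ₗ[k] k := B.constr k fun g => if g = (1 : G) then (1 : k) else 0 with hlam1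
  have hlamB : ∀ g : G, lam1 (B g) = if g = 1 then (1 : k) else 0 := fun g =>
    B.constr_basis _ _ _
  have hl' : ∀ (x : H) (a : A), l (x ⊗ₜ[k] a) = counit (R := k) x * lam1 a := by
    intro x a
    rw [hl]
    simp [smul_eq_mul]
  -- counit of group-like basis elements is 1
  have hcB : ∀ g : G, counit (R := k) (B g) = 1 := by
    intro g
    have h1 : (TensorProduct.lid k A) ((counit (R := k)).rTensor A (comul (R := k) (B g)))
        = (TensorProduct.lid k A) ((1 : k) ⊗ₜ[k] B g) := by rw [rTensor_counit_comul]
    rw [hBc] at h1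
    simp only [LinearMap.rTensor_tmul, TensorProduct.lid_tmul, one_smul] at h1
    have h2 : (counit (R := k) (B g) - 1) • B g = 0 := by
      rw [sub_smul, one_smul, h1, sub_self]
    rcases smul_eq_zero.mp h2 with h | h
    · exact sub_eq_zero.mp h
    · exact absurd h (B.ne_zero g)
  -- counit on tensor products
  have hcount : ∀ (x : H) (a : A),
      counit (R := k) (x ⊗ₜ[k] a) = counit (R := k) x * counit (R := k) a := by
    intro x a
    simp [mul_comm, LinearMap.mul'_apply]
  -- comul on tensor products
  have hcomulT : ∀ (x : H) (a : A),
      comul (R := k) (x ⊗ₜ[k] a) =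
        TensorProduct.tensorTensorTensorComm k H H A A
          (comul (R := k) x ⊗ₜ[k] comul (R := k) a) := by
    intro x a
    simp [TensorProduct.AlgebraTensorModule.tensorTensorTensorComm_eq]
  -- key formula for pconv
  have hpconv : ∀ (m : H ⊗[k] A →ₗ[k] k) (x : H) (g : G),
      pconv k l m (x ⊗ₜ[k] B g) = (if g = 1 then (1 : k) else 0) * m (x ⊗ₜ[k] B g) := by
    intro m x g
    have hx : x = (TensorProduct.lid k H)
        ((counit (R := k)).rTensor H (comul (R := k) x)) := by
      rw [rTensor_counit_comul]; simp
    unfold pconv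
    simp only [LinearMap.comp_apply, LinearEquiv.coe_coe]
    rw [hcomulT, hBc]
    conv_rhs => rw [hx]
    generalize comul (R := k) x = c
    induction c using TensorProduct.induction_on with
    | zero => simp
    | tmul y z =>
        simp only [TensorProduct.tensorTensorTensorComm_tmul, TensorProduct.map_tmul,
          TensorProduct.lid_tmul, LinearMap.rTensor_tmul, hl', hlamB, smul_eq_mul,
          ← TensorProduct.smul_tmul', map_smul]
        ring
    | add c d hc hd =>
        simp only [TensorProduct.add_tmul, map_add, mul_add] at hc hd ⊢
        rw [hc, hd]
  -- key formula for lamL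
  have hlamL : ∀ (x : H) (g : G),
      lamL k l (x ⊗ₜ[k] B g) = (if g = 1 then (1 : k) else 0) • (x ⊗ₜ[k] B g) := by
    intro x g
    have hx : x = (TensorProduct.lid k H)
        ((counit (R := k)).rTensor H (comul (R := k) x)) := by
      rw [rTensor_counit_comul]; simp
    unfold lamL
    simp only [LinearMap.comp_apply, LinearEquiv.coe_coe]
    rw [hcomulT, hBc]
    conv_rhs => rw [hx]
    generalize comul (R := k) x = c
    induction c using TensorProduct.induction_on with
    | zero => simp
    | tmul y z =>
        simp only [TensorProduct.tensorTensorTensorComm_tmul, TensorProduct.map_tmul,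
          TensorProduct.lid_tmul, LinearMap.rTensor_tmul, LinearMap.id_coe, id_eq,
          hl', hlamB, ← TensorProduct.smul_tmul', smul_smul]
        rw [mul_comm]
    | add c d hc hd =>
        simp only [TensorProduct.add_tmul, map_add, smul_add] at hc hd ⊢
        rw [hc, hd]
  -- spanning set
  have hspan : ∀ w : H ⊗[k] A,
      w ∈ Submodule.span k {w : H ⊗[k] A | ∃ x g, w = x ⊗ₜ[k] B g} := by
    intro w
    induction w using TensorProduct.induction_on with
    | zero => exact zero_mem _
    | add u v hu hv => exact add_mem hu hv
    | tmul x a =>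
        refine Submodule.span_induction
          (p := fun a' _ => x ⊗ₜ[k] a' ∈
            Submodule.span k {w : H ⊗[k] A | ∃ x g, w = x ⊗ₜ[k] B g})
          ?_ ?_ ?_ ?_ (B.mem_span a)
        · rintro _ ⟨g, rfl⟩
          exact Submodule.subset_span ⟨x, g, rfl⟩
        · beta_reduce; rw [TensorProduct.tmul_zero]; exact zero_mem _
        · intro a b _ _ ha hb; beta_reduce at ha hb ⊢
          rw [TensorProduct.tmul_add]; exact add_mem ha hb
        · intro r a _ ha; beta_reduce at ha ⊢
          rw [TensorProduct.tmul_smul]; exact Submodule.smul_mem _ _ ha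
  refine ⟨⟨?_, ?_⟩, ?_, ?_⟩
  · -- l 1 = 1
    rw [Algebra.TensorProduct.one_def, hl', ← hB1, hlamB]
    simp
  · -- partial action identity
    intro h v
    refine Submodule.span_induction
      (p := fun h' _ => ∀ v : H ⊗[k] A,
        l h' * l v = pconv k l (l ∘ₗ LinearMap.mulRight k v) h')
      ?_ ?_ ?_ ?_ (hspan h) v
    · rintro _ ⟨x, g, rfl⟩ v
      beta_reduce
      rw [hpconv]
      simp only [LinearMap.comp_apply, LinearMap.mulRight_apply]
      rw [hl' x (B g), hlamB]
      refine Submodule.span_induction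
        (p := fun v' _ => (counit (R := k) x * if g = 1 then (1 : k) else 0) * l v' =
          (if g = 1 then (1 : k) else 0) * l ((x ⊗ₜ[k] B g) * v'))
        ?_ ?_ ?_ ?_ (hspan v)
      · rintro _ ⟨y, g', rfl⟩
        beta_reduce
        rw [Algebra.TensorProduct.tmul_mul_tmul, ← hBmul, hl', hl', hlamB, hlamB,
          Bialgebra.counit_mul]
        by_cases hg : g = 1
        · subst hg; simp only [if_pos rfl, one_mul]; ring
        · simp [hg]
      · beta_reduce; simp
      · intro a b _ _ ha hb
        beta_reduce at ha hb ⊢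
        rw [mul_add, map_add, mul_add, ha, hb, ← mul_add, ← map_add, ← mul_add]
      · intro r a _ ha
        beta_reduce at ha ⊢
        rw [mul_smul_comm, map_smul, map_smul, smul_eq_mul, smul_eq_mul,
          mul_left_comm, ha, mul_left_comm]
    · intro v; simp
    · intro a b _ _ ha hb v
      beta_reduce at ha hb ⊢
      simp only [map_add, add_mul]
      rw [ha v, hb v]
    · intro r a _ ha v
      beta_reduce at ha ⊢
      rw [map_smul, map_smul, smul_eq_mul, smul_eq_mul, mul_assoc, ha v]
  · -- l ≠ counit
    obtain ⟨g, hg⟩ := exists_ne (1 : G)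
    intro heq
    have h0 : l ((1 : H) ⊗ₜ[k] B g) = 0 := by
      rw [hl', hlamB]
      simp [hg]
    rw [heq, hcount, hcB g, Bialgebra.counit_one, one_mul] at h0
    exact one_ne_zero h0
  · -- the embedding f
    refine ⟨(TensorProduct.mk k H A).flip 1, ?_, ?_, ?_, ?_, ?_, ?_⟩
    · -- injective
      refine Function.LeftInverse.injective
        (g := (TensorProduct.rid k H).toLinearMap ∘ₗ LinearMap.lTensor H (B.coord 1)) ?_
      intro x
      simp only [LinearMap.comp_apply, TensorProduct.mk_apply, LinearMap.flip_apply,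
        LinearMap.lTensor_tmul, LinearEquiv.coe_coe, TensorProduct.rid_tmul, ← hB1,
        Module.Basis.coord_apply, Module.Basis.repr_self, Finsupp.single_eq_same, one_smul]
    · -- f 1 = 1
      exact (Algebra.TensorProduct.one_def).symm
    · -- multiplicative
      intro a b
      show (a * b) ⊗ₜ[k] (1 : A) = (a ⊗ₜ[k] (1 : A)) * (b ⊗ₜ[k] (1 : A))
      rw [Algebra.TensorProduct.tmul_mul_tmul, mul_one]
    · -- comultiplicative
      intro a
      show comul (R := k) (a ⊗ₜ[k] (1 : A)) = _
      rw [hcomulT, hBc1]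
      generalize comul (R := k) a = c
      induction c using TensorProduct.induction_on with
      | zero => simp
      | tmul y z =>
          simp only [TensorProduct.tensorTensorTensorComm_tmul, TensorProduct.map_tmul,
            TensorProduct.mk_apply, LinearMap.flip_apply]
      | add c d hc hd =>
          simp only [TensorProduct.add_tmul, map_add] at hc hd ⊢
          rw [hc, hd]
    · -- counital
      intro a
      show counit (R := k) (a ⊗ₜ[k] (1 : A)) = _
      rw [hcount, Bialgebra.counit_one, mul_one]
    · -- range equality
      apply le_antisymm
      · rintro _ ⟨x, rfl⟩
        refine ⟨x ⊗ₜ[k] B 1, ?_⟩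
        rw [hlamL, if_pos rfl, one_smul, hB1]
        rfl
      · rintro _ ⟨w, rfl⟩
        refine Submodule.span_induction
          (p := fun w' _ => lamL k l w' ∈ LinearMap.range ((TensorProduct.mk k H A).flip 1))
          ?_ ?_ ?_ ?_ (hspan w)
        · rintro _ ⟨x, g, rfl⟩
          beta_reduce
          rw [hlamL]
          by_cases hgg : g = 1
          · subst hgg
            rw [if_pos rfl, one_smul]
            exact ⟨x, by rw [hB1]; rfl⟩
          · rw [if_neg hgg, zero_smul]
            exact zero_mem _
        · beta_reduce; rw [map_zero]; exact zero_mem _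
        · intro a b _ _ ha hb; beta_reduce at ha hb ⊢
          rw [map_add]; exact add_mem ha hb
        · intro r a _ ha; beta_reduce at ha ⊢
          rw [map_smul]; exact Submodule.smul_mem _ _ ha
end

section
/- Let n ≥ 2 and k ≥ 1 be integers, ω a primitive kn-th root of unity in an algebraically closed field of characteristic zero, and T_n^k(ω) the generalized Taft algebra generated by g, x with g^{kn} = 1, x^n = 0, xg = ω gx, where g is group-like and x is (1, g^k)-primitive. Then the linear map λ on the basis {gⁱxʲ : 0 ≤ i ≤ kn−1, 0 ≤ j ≤ n−1} defined by λ(gⁱxʲ) = δ_{j,0}·[gⁱ ∈ ⟨g^k⟩] is a partial action of T_n^k(ω) on the base field, and the resulting subalgebra (T_n^k(ω))_λ = {λ(u₁)u₂ | u} is a Hopf subalgebra isomorphic to the Taft algebra T_n(ω^k). -/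
open TensorProduct Coalgebra HopfAlgebra

variable (k : Type*) [Field k]

section TaftAuxA
variable {k : Type*} [Field k] {H : Type*} [Ring H] [Algebra k H]

lemma taft_xg_pow {ω : k} {g x : H} (hcomm : x * g = ω • (g * x)) (a b : ℕ) :
    x ^ b * g ^ a = ω ^ (a * b) • (g ^ a * x ^ b) := by
  have h1 : ∀ a : ℕ, x * g ^ a = ω ^ a • (g ^ a * x) := by
    intro a
    induction a with
    | zero => simp
    | succ a ih =>
      rw [pow_succ, ← mul_assoc, ih, smul_mul_assoc, mul_assoc, hcomm, mul_smul_comm,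
        smul_smul, ← pow_succ]
      rw [← mul_assoc, ← pow_succ]
  induction b with
  | zero => simp
  | succ b ih =>
    rw [pow_succ, mul_assoc, h1, mul_smul_comm, ← mul_assoc, ih, smul_mul_assoc, smul_smul,
      mul_assoc, ← pow_succ, ← pow_add]
    ring_nf

lemma taft_g_mod {g : H} {N : ℕ} (hgord : g ^ N = 1) (m : ℕ) :
    g ^ m = g ^ (m % N) := by
  conv_lhs => rw [← Nat.mod_add_div m N, pow_add, pow_mul, hgord, one_pow, mul_one]

lemma taft_mix {ω : k} {g x : H} (hcomm : x * g = ω • (g * x)) (i u a b : ℕ) :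
    (g ^ i * x ^ u) * (g ^ a * x ^ b) = ω ^ (a * u) • (g ^ (i + a) * x ^ (u + b)) := by
  rw [mul_assoc (g ^ i) (x ^ u) (g ^ a * x ^ b), ← mul_assoc (x ^ u) (g ^ a) (x ^ b),
    taft_xg_pow hcomm, smul_mul_assoc, mul_smul_comm, mul_assoc (g ^ a) (x ^ u) (x ^ b),
    ← pow_add x u b, ← mul_assoc (g ^ i) (g ^ a) _, ← pow_add g i a]

end TaftAuxA

section TaftAuxB
variable {k : Type*} [Field k] {H : Type*} [Ring H] [Bialgebra k H]

lemma taft_comul_gpow {g : H} (hg : comul (R := k) g = g ⊗ₜ[k] g) (i : ℕ) :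
    comul (R := k) (g ^ i) = (g ^ i) ⊗ₜ[k] (g ^ i) := by
  rw [Bialgebra.comul_pow, hg, Algebra.TensorProduct.tmul_pow]

lemma taft_comul_xpow {ω : k} {g x : H} (K : ℕ)
    (hcomm : x * g = ω • (g * x))
    (hx : comul (R := k) x = x ⊗ₜ[k] 1 + (g ^ K) ⊗ₜ[k] x) (j : ℕ) :
    ∃ c : ℕ → k, c 0 = 1 ∧ c j = 1 ∧
      comul (R := k) (x ^ j) =
        ∑ ℓ ∈ Finset.range (j + 1), c ℓ • ((g ^ (K * ℓ) * x ^ (j - ℓ)) ⊗ₜ[k] (x ^ ℓ)) := by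
  induction j with
  | zero => exact ⟨fun _ => 1, rfl, rfl, by simp [Algebra.TensorProduct.one_def]⟩
  | succ j ih =>
    obtain ⟨c, hc0, hcj, hcomul⟩ := ih
    refine ⟨fun ℓ => (if ℓ ≤ j then c ℓ else 0) +
      (if 1 ≤ ℓ ∧ ℓ ≤ j + 1 then ω ^ (K * (j + 1 - ℓ)) * c (ℓ - 1) else 0), by simp [hc0], ?_, ?_⟩
    · simp [hcj]
    · rw [pow_succ, Bialgebra.comul_mul, hcomul, hx, Finset.sum_mul]
      have expand : ∀ ℓ ∈ Finset.range (j + 1),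
          (c ℓ • ((g ^ (K * ℓ) * x ^ (j - ℓ)) ⊗ₜ[k] (x ^ ℓ))) * (x ⊗ₜ[k] 1 + (g ^ K) ⊗ₜ[k] x)
          = c ℓ • ((g ^ (K * ℓ) * x ^ (j + 1 - ℓ)) ⊗ₜ[k] (x ^ ℓ))
            + (ω ^ (K * (j - ℓ)) * c ℓ) •
              ((g ^ (K * (ℓ + 1)) * x ^ (j - ℓ)) ⊗ₜ[k] (x ^ (ℓ + 1))) := by
        intro ℓ hℓ
        rw [Finset.mem_range, Nat.lt_succ_iff] at hℓ
        have e1 : ((g ^ (K * ℓ) * x ^ (j - ℓ)) ⊗ₜ[k] (x ^ ℓ)) * (x ⊗ₜ[k] 1)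
            = (g ^ (K * ℓ) * x ^ (j + 1 - ℓ)) ⊗ₜ[k] (x ^ ℓ) := by
          rw [Algebra.TensorProduct.tmul_mul_tmul, mul_one, mul_assoc, ← pow_succ,
            Nat.sub_add_comm hℓ]
        have e2 : ((g ^ (K * ℓ) * x ^ (j - ℓ)) ⊗ₜ[k] (x ^ ℓ)) * ((g ^ K) ⊗ₜ[k] x)
            = ω ^ (K * (j - ℓ)) • ((g ^ (K * (ℓ + 1)) * x ^ (j - ℓ)) ⊗ₜ[k] (x ^ (ℓ + 1))) := by
          rw [Algebra.TensorProduct.tmul_mul_tmul, ← pow_succ, mul_assoc,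
            taft_xg_pow hcomm K (j - ℓ), mul_smul_comm, ← mul_assoc, ← pow_add]
          rw [mul_add K ℓ 1, mul_one, TensorProduct.smul_tmul']
        rw [mul_add, smul_mul_assoc, smul_mul_assoc, e1, e2, smul_smul, mul_comm (c ℓ)]
      rw [Finset.sum_congr rfl expand, Finset.sum_add_distrib]
      have split : ∀ ℓ ∈ Finset.range (j + 1 + 1), ((if ℓ ≤ j then c ℓ else 0) +
          (if 1 ≤ ℓ ∧ ℓ ≤ j + 1 then ω ^ (K * (j + 1 - ℓ)) * c (ℓ - 1) else 0)) •
            ((g ^ (K * ℓ) * x ^ (j + 1 - ℓ)) ⊗ₜ[k] (x ^ ℓ))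
          = (if ℓ ≤ j then c ℓ else 0) • ((g ^ (K * ℓ) * x ^ (j + 1 - ℓ)) ⊗ₜ[k] (x ^ ℓ))
            + (if 1 ≤ ℓ ∧ ℓ ≤ j + 1 then ω ^ (K * (j + 1 - ℓ)) * c (ℓ - 1) else 0) •
              ((g ^ (K * ℓ) * x ^ (j + 1 - ℓ)) ⊗ₜ[k] (x ^ ℓ)) := fun ℓ _ => add_smul _ _ _
      rw [Finset.sum_congr rfl split, Finset.sum_add_distrib]
      have A1 : ∑ ℓ ∈ Finset.range (j + 1 + 1),
          (if ℓ ≤ j then c ℓ else 0) • ((g ^ (K * ℓ) * x ^ (j + 1 - ℓ)) ⊗ₜ[k] (x ^ ℓ))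
          = ∑ ℓ ∈ Finset.range (j + 1),
            c ℓ • ((g ^ (K * ℓ) * x ^ (j + 1 - ℓ)) ⊗ₜ[k] (x ^ ℓ)) := by
        rw [Finset.sum_range_succ, if_neg (by omega), zero_smul, add_zero]
        refine Finset.sum_congr rfl fun ℓ hℓ => ?_
        rw [Finset.mem_range, Nat.lt_succ_iff] at hℓ
        rw [if_pos hℓ]
      have A2 : ∑ ℓ ∈ Finset.range (j + 1 + 1),
          (if 1 ≤ ℓ ∧ ℓ ≤ j + 1 then ω ^ (K * (j + 1 - ℓ)) * c (ℓ - 1) else 0) •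
            ((g ^ (K * ℓ) * x ^ (j + 1 - ℓ)) ⊗ₜ[k] (x ^ ℓ))
          = ∑ ℓ ∈ Finset.range (j + 1), (ω ^ (K * (j - ℓ)) * c ℓ) •
              ((g ^ (K * (ℓ + 1)) * x ^ (j - ℓ)) ⊗ₜ[k] (x ^ (ℓ + 1))) := by
        rw [Finset.sum_range_succ', if_neg (by omega), zero_smul, add_zero]
        refine Finset.sum_congr rfl fun ℓ hℓ => ?_
        rw [Finset.mem_range] at hℓ
        rw [if_pos ⟨by omega, by omega⟩]
        have h : j + 1 - (ℓ + 1) = j - ℓ := by omega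
        rw [h]
        simp only [Nat.add_sub_cancel]
      rw [A1, A2]

end TaftAuxB

/-- for the generalized Taft algebra `T_n^K(ω)` (presented abstractly: a
Hopf algebra with group-like `g` of order `K*n`, a `(1, g^K)`-primitive `x` with `x^n = 0`
and `x g = ω g x`, and basis `{gⁱ xʲ}`), the functional `λ(gⁱxʲ) = δ_{j,0}·[K ∣ i]` is a
partial action on the base field, and the resulting subalgebra `(T_n^K(ω))_λ` is a Hopf
subalgebra equal to the span of `{g^{rK} xʲ}`, i.e. the image of the Taft algebra
`T_n(ω^K)` under its canonical embedding. -/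
theorem taft_lambdaHopf {k : Type*} [Field k] [IsAlgClosed k] [CharZero k]
    {H : Type*} [Ring H] [HopfAlgebra k H]
    (n K : ℕ) (hn : 2 ≤ n) (hK : 1 ≤ K) (ω : k) (hω : IsPrimitiveRoot ω (K * n))
    (g x : H)
    (hg : comul (R := k) g = g ⊗ₜ[k] g)
    (hgord : g ^ (K * n) = 1)
    (hxn : x ^ n = 0)
    (hcomm : x * g = ω • (g * x))
    (hx : comul (R := k) x = x ⊗ₜ[k] 1 + (g ^ K) ⊗ₜ[k] x)
    (B : Module.Basis (Fin (K * n) × Fin n) k H)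
    (hB : ∀ p : Fin (K * n) × Fin n, B p = g ^ (p.1 : ℕ) * x ^ (p.2 : ℕ)) :
    ∀ l : H →ₗ[k] k,
      l = B.constr k (fun p => if (p.2 : ℕ) = 0 ∧ K ∣ (p.1 : ℕ) then (1 : k) else 0) →
      IsPartialAction k l ∧
      LinearMap.range (lamL k l) =
        Submodule.span k
          {u : H | ∃ r : Fin n, ∃ j : Fin n, u = g ^ ((r : ℕ) * K) * x ^ (j : ℕ)} ∧
      (∀ a ∈ LinearMap.range (lamL k l),
        comul (R := k) a ∈ LinearMap.range
          (TensorProduct.map (LinearMap.range (lamL k l)).subtype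
            (LinearMap.range (lamL k l)).subtype)) ∧
      (∀ a ∈ LinearMap.range (lamL k l),
        antipode (R := k) a ∈ LinearMap.range (lamL k l)) := by
  intro l hl
  have hKn : 0 < K * n := Nat.mul_pos hK (by omega)
  have npos : 0 < n := by omega
  -- basic nonvanishing
  have h1H : (1 : H) ≠ 0 := by
    have h : (1 : H) = B (⟨0, hKn⟩, ⟨0, npos⟩) := by rw [hB]; simp
    rw [h]; exact B.ne_zero _
  have hgnz : g ≠ 0 := by
    have h : g = B (⟨1, by nlinarith⟩, ⟨0, npos⟩) := by rw [hB]; simp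
    rw [h]; exact B.ne_zero _
  -- counit values
  have hεg : counit (R := k) g = 1 := by
    have h0 := rTensor_counit_comul (R := k) g
    rw [hg, LinearMap.rTensor_tmul] at h0
    have h2 : (counit (R := k) g) • g = (1 : k) • g := by
      have := congrArg (TensorProduct.lid k H) h0
      simpa using this
    have h3 : (counit (R := k) g - 1) • g = 0 := by rw [sub_smul, h2, one_smul, sub_self]
    exact sub_eq_zero.mp ((smul_eq_zero.mp h3).resolve_right hgnz)
  have hεx : counit (R := k) x = 0 := by
    have h0 := rTensor_counit_comul (R := k) x
    rw [hx, map_add, LinearMap.rTensor_tmul, LinearMap.rTensor_tmul,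
      Bialgebra.counit_pow, hεg, one_pow] at h0
    have h2 := congrArg (TensorProduct.lid k H) h0
    simp only [map_add, TensorProduct.lid_tmul, one_smul] at h2
    rw [add_eq_right] at h2
    exact (smul_eq_zero.mp h2).resolve_right h1H
  -- x^b = 0 for b ≥ n
  have hxz : ∀ b : ℕ, n ≤ b → x ^ b = 0 := by
    intro b hb
    rw [show b = n + (b - n) by omega, pow_add, hxn, zero_mul]
  -- values of l
  have hlv : ∀ a b : ℕ, l (g ^ a * x ^ b) = if b = 0 ∧ K ∣ a then 1 else 0 := by
    intro a b
    by_cases hb : b < n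
    · have h1 : g ^ a * x ^ b = B (⟨a % (K * n), Nat.mod_lt _ hKn⟩, ⟨b, hb⟩) := by
        rw [hB]; exact congrArg (· * x ^ b) (taft_g_mod hgord a)
      rw [h1, hl, Module.Basis.constr_basis]
      simp only [Nat.dvd_mod_iff (dvd_mul_right K n)]
    · rw [hxz b (by omega), mul_zero, map_zero, if_neg (by omega)]
  -- comultiplication of basis-type elements
  have hΔ : ∀ i j : ℕ, ∃ c : ℕ → k, c 0 = 1 ∧ c j = 1 ∧
      comul (R := k) (g ^ i * x ^ j) = ∑ ℓ ∈ Finset.range (j + 1),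
        c ℓ • ((g ^ (i + K * ℓ) * x ^ (j - ℓ)) ⊗ₜ[k] (g ^ i * x ^ ℓ)) := by
    intro i j
    obtain ⟨c, hc0, hcj, hcx⟩ := taft_comul_xpow K hcomm hx j
    refine ⟨c, hc0, hcj, ?_⟩
    rw [Bialgebra.comul_mul, taft_comul_gpow hg, hcx, Finset.mul_sum]
    refine Finset.sum_congr rfl fun ℓ _ => ?_
    rw [mul_smul_comm]
    congr 1
    rw [Algebra.TensorProduct.tmul_mul_tmul, ← mul_assoc, ← pow_add]
  have hdvd : ∀ i j : ℕ, (K ∣ i + K * j) ↔ K ∣ i := by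
    intro i j
    constructor
    · intro h; exact (Nat.dvd_add_iff_left (dvd_mul_right K j)).mpr h
    · intro h; exact h.add (dvd_mul_right K j)
  -- evaluation of pconv on basis-type elements
  have hpc : ∀ (m : H →ₗ[k] k) (i j : ℕ), pconv k l m (g ^ i * x ^ j)
      = (if K ∣ i then 1 else 0) * m (g ^ i * x ^ j) := by
    intro m i j
    obtain ⟨c, hc0, hcj, hcm⟩ := hΔ i j
    rw [pconv, LinearMap.comp_apply, LinearMap.comp_apply, hcm, map_sum, map_sum]
    simp only [map_smul, TensorProduct.map_tmul, LinearEquiv.coe_coe, TensorProduct.lid_tmul,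
      smul_eq_mul]
    rw [Finset.sum_eq_single j]
    · rw [Nat.sub_self, hcj, one_mul, hlv]
      congr 1
      simp [hdvd i j]
    · intro ℓ hℓ hne
      rw [Finset.mem_range, Nat.lt_succ_iff] at hℓ
      rw [hlv, if_neg (by omega), zero_mul, mul_zero]
    · intro hj; exact absurd (Finset.self_mem_range_succ j) hj
  -- evaluation of lamL on basis-type elements
  have hlam : ∀ i j : ℕ, lamL k l (g ^ i * x ^ j)
      = (if K ∣ i then (1 : k) else 0) • (g ^ i * x ^ j) := by
    intro i j
    obtain ⟨c, hc0, hcj, hcm⟩ := hΔ i j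
    rw [lamL, LinearMap.comp_apply, LinearMap.comp_apply, hcm, map_sum, map_sum]
    simp only [map_smul, TensorProduct.map_tmul, LinearEquiv.coe_coe, TensorProduct.lid_tmul,
      LinearMap.id_coe, id_eq]
    rw [Finset.sum_eq_single j]
    · rw [Nat.sub_self, hcj, one_smul, hlv]
      congr 1
      simp [hdvd i j]
    · intro ℓ hℓ hne
      rw [Finset.mem_range, Nat.lt_succ_iff] at hℓ
      rw [hlv, if_neg (by omega), zero_smul, smul_zero]
    · intro hj; exact absurd (Finset.self_mem_range_succ j) hj
  -- left-multiplication invariance of l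
  have hml : ∀ i j : ℕ, K ∣ i →
      (l ∘ₗ LinearMap.mulLeft k (g ^ i * x ^ j)) = (if j = 0 then (1 : k) else 0) • l := by
    intro i j hKi
    refine B.ext fun q => ?_
    rw [hB]
    simp only [LinearMap.coe_comp, Function.comp_apply, LinearMap.mulLeft_apply,
      LinearMap.smul_apply]
    rw [taft_mix hcomm, map_smul, hlv, hlv, smul_eq_mul, smul_eq_mul]
    by_cases hj : j = 0
    · subst hj
      simp only [mul_zero, pow_zero, one_mul, zero_add, if_pos rfl]
      congr 1
      have hKiq : K ∣ i + (q.1 : ℕ) ↔ K ∣ (q.1 : ℕ) := by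
        constructor
        · intro h; exact (Nat.dvd_add_iff_right hKi).mpr h
        · intro h; exact hKi.add h
      simp [hKiq]
    · rw [if_neg hj, zero_mul, if_neg (by omega), mul_zero]
  -- the partial action identity on basis-type elements
  have main : ∀ i j : ℕ, ∀ v : H,
      l (g ^ i * x ^ j) * l v = pconv k l (l ∘ₗ LinearMap.mulRight k v) (g ^ i * x ^ j) := by
    intro i j v
    rw [hpc, hlv]
    simp only [LinearMap.coe_comp, Function.comp_apply, LinearMap.mulRight_apply]
    by_cases hKi : K ∣ i
    · rw [if_pos hKi, one_mul]
      have h1 := LinearMap.congr_fun (hml i j hKi) v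
      simp only [LinearMap.coe_comp, Function.comp_apply, LinearMap.mulLeft_apply,
        LinearMap.smul_apply, smul_eq_mul] at h1
      rw [h1]
      by_cases hj : j = 0
      · rw [if_pos ⟨hj, hKi⟩, if_pos hj]
      · rw [if_neg (fun hc => hj hc.1), if_neg hj]
    · rw [if_neg hKi, if_neg (fun hc => hKi hc.2), zero_mul, zero_mul]
  have part1 : IsPartialAction k l := by
    constructor
    · have h : (1 : H) = g ^ 0 * x ^ 0 := by simp
      rw [h, hlv 0 0, if_pos ⟨rfl, dvd_zero K⟩]
    · intro h v
      have lin1 : (l v) • l = pconv k l (l ∘ₗ LinearMap.mulRight k v) := by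
        refine B.ext fun p => ?_
        rw [hB]
        have := main (p.1 : ℕ) (p.2 : ℕ) v
        rw [LinearMap.smul_apply, smul_eq_mul, mul_comm]
        exact this
      have := LinearMap.congr_fun lin1 h
      rw [LinearMap.smul_apply, smul_eq_mul, mul_comm] at this
      exact this
  -- the subalgebra
  set M := Submodule.span k
      {u : H | ∃ r : Fin n, ∃ j : Fin n, u = g ^ ((r : ℕ) * K) * x ^ (j : ℕ)} with hMdef
  have hMemM : ∀ s b : ℕ, g ^ (s * K) * x ^ b ∈ M := by
    intro s b
    by_cases hb : b < n
    · have hsplit : g ^ (s * K) = g ^ ((s % n) * K) := by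
        conv_lhs => rw [show s * K = (K * n) * (s / n) + (s % n) * K by
          conv_lhs => rw [← Nat.div_add_mod s n]
          ring]
        rw [pow_add, pow_mul, hgord, one_pow, one_mul]
      rw [hsplit]
      exact Submodule.subset_span ⟨⟨s % n, Nat.mod_lt _ npos⟩, ⟨b, hb⟩, rfl⟩
    · rw [hxz b (by omega), mul_zero]
      exact zero_mem _
  have hgKmem : ∀ m : ℕ, K ∣ m → g ^ m ∈ M := by
    rintro m ⟨s, rfl⟩
    have h := hMemM s 0
    rwa [pow_zero, mul_one, mul_comm s K] at h
  have hrange : LinearMap.range (lamL k l) = M := by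
    apply le_antisymm
    · rw [LinearMap.range_eq_map, ← B.span_eq, Submodule.map_span]
      refine Submodule.span_le.mpr ?_
      rintro _ ⟨_, ⟨p, rfl⟩, rfl⟩
      rw [hB, hlam]
      split_ifs with hdv
      · obtain ⟨r, hr⟩ := hdv
        have hrn : r < n := by
          have := p.1.isLt
          rw [hr] at this
          exact Nat.lt_of_mul_lt_mul_left this
        rw [one_smul]
        exact Submodule.subset_span ⟨⟨r, hrn⟩, p.2, by rw [hr, mul_comm]⟩
      · rw [zero_smul]; exact zero_mem _
    · refine Submodule.span_le.mpr ?_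
      rintro _ ⟨r, j, rfl⟩
      refine ⟨g ^ ((r : ℕ) * K) * x ^ (j : ℕ), ?_⟩
      rw [hlam, if_pos (Dvd.intro_left _ rfl), one_smul]
  refine ⟨part1, hrange, ?_, ?_⟩
  · -- comultiplication stability
    intro a ha
    set N := LinearMap.range (lamL k l) with hNdef
    have key3 : M ≤ Submodule.comap (comul (R := k) (A := H))
        (LinearMap.range (TensorProduct.map N.subtype N.subtype)) := by
      refine Submodule.span_le.mpr ?_
      rintro _ ⟨r, j, rfl⟩
      simp only [Set.mem_setOf_eq, SetLike.mem_coe, Submodule.mem_comap]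
      obtain ⟨c, -, -, hcm⟩ := hΔ ((r : ℕ) * K) (j : ℕ)
      rw [hcm]
      refine Submodule.sum_mem _ fun ℓ _ => Submodule.smul_mem _ _ ?_
      have h1 : g ^ ((r : ℕ) * K + K * ℓ) * x ^ ((j : ℕ) - ℓ) ∈ N := by
        rw [hrange]
        have h := hMemM ((r : ℕ) + ℓ) ((j : ℕ) - ℓ)
        rwa [show ((r : ℕ) + ℓ) * K = (r : ℕ) * K + K * ℓ by ring] at h
      have h2 : g ^ ((r : ℕ) * K) * x ^ ℓ ∈ N := by
        rw [hrange]; exact hMemM r ℓ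
      exact ⟨(⟨_, h1⟩ : N) ⊗ₜ[k] (⟨_, h2⟩ : N), by simp [TensorProduct.map_tmul]⟩
    exact key3 (hrange ▸ ha)
  · -- antipode stability
    intro a ha
    have hSg : ∀ m : ℕ, antipode (R := k) (g ^ m) * g ^ m = 1 := by
      intro m
      have h0 := mul_antipode_rTensor_comul_apply (R := k) (g ^ m)
      rw [taft_comul_gpow hg, LinearMap.rTensor_tmul, LinearMap.mul'_apply] at h0
      rw [h0, Bialgebra.counit_pow, hεg, one_pow, map_one]
    have hginv : ∀ m : ℕ, g ^ m * g ^ (K * n - m % (K * n)) = 1 ∧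
        g ^ (K * n - m % (K * n)) * g ^ m = 1 := by
      intro m
      have hdm := Nat.div_add_mod m (K * n)
      have hlt : m % (K * n) < K * n := Nat.mod_lt _ hKn
      have e2 : g ^ (m + (K * n - m % (K * n))) = 1 := by
        rw [show m + (K * n - m % (K * n)) = (K * n) * (m / (K * n)) + (K * n) * 1 by omega,
          ← mul_add, pow_mul, hgord, one_pow]
      constructor
      · rw [← pow_add]; exact e2
      · rw [← pow_add, add_comm]; exact e2
    have hMmul : ∀ (s b : ℕ), ∀ w ∈ M, (g ^ (s * K) * x ^ b) * w ∈ M := by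
      intro s b w hw
      induction hw using Submodule.span_induction with
      | mem w hw =>
        obtain ⟨r, j, rfl⟩ := hw
        rw [taft_mix hcomm]
        refine Submodule.smul_mem _ _ ?_
        have h := hMemM (s + (r : ℕ)) (b + (j : ℕ))
        rwa [show (s + (r : ℕ)) * K = s * K + (r : ℕ) * K by ring] at h
      | zero => rw [mul_zero]; exact zero_mem _
      | add y z hy hz ihy ihz => rw [mul_add]; exact add_mem ihy ihz
      | smul r y hy ihy => rw [mul_smul_comm]; exact Submodule.smul_mem _ _ ihy
    have hS : ∀ j : ℕ, ∀ r : ℕ, antipode (R := k) (g ^ (r * K) * x ^ j) ∈ M := by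
      intro j
      induction j using Nat.strong_induction_on with
      | _ j ih =>
        intro r
        by_cases hjn : j < n
        · rcases Nat.eq_zero_or_pos j with hj0 | hjpos
          · subst hj0
            rw [pow_zero, mul_one]
            obtain ⟨hgt1, hgt2⟩ := hginv (r * K)
            have heq : antipode (R := k) (g ^ (r * K))
                = g ^ (K * n - (r * K) % (K * n)) := by
              calc antipode (R := k) (g ^ (r * K))
                  = antipode (R := k) (g ^ (r * K)) *
                    (g ^ (r * K) * g ^ (K * n - (r * K) % (K * n))) := by rw [hgt1, mul_one]
                _ = (antipode (R := k) (g ^ (r * K)) * g ^ (r * K)) *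
                    g ^ (K * n - (r * K) % (K * n)) := by rw [mul_assoc]
                _ = g ^ (K * n - (r * K) % (K * n)) := by rw [hSg, one_mul]
            rw [heq]
            exact hgKmem _ (Nat.dvd_sub (dvd_mul_right K n)
              ((Nat.dvd_mod_iff (dvd_mul_right K n)).mpr (Dvd.intro_left r rfl)))
          · obtain ⟨c, hc0, hcj, hcm⟩ := hΔ (r * K) j
            have h0 := mul_antipode_lTensor_comul_apply (R := k) (g ^ (r * K) * x ^ j)
            rw [hcm, map_sum, map_sum] at h0
            simp only [map_smul, LinearMap.lTensor_tmul, LinearMap.mul'_apply] at h0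
            have hcounit : counit (R := k) (g ^ (r * K) * x ^ j) = 0 := by
              rw [Bialgebra.counit_mul, Bialgebra.counit_pow, Bialgebra.counit_pow, hεg, hεx,
                one_pow, zero_pow (by omega : j ≠ 0), mul_zero]
            rw [hcounit, map_zero, Finset.sum_range_succ, hcj, one_smul, Nat.sub_self,
              pow_zero, mul_one] at h0
            obtain ⟨-, hgt2⟩ := hginv (r * K + K * j)
            have h1 : g ^ (r * K + K * j) * antipode (R := k) (g ^ (r * K) * x ^ j)
                = - ∑ ℓ ∈ Finset.range j, c ℓ • (g ^ (r * K + K * ℓ) * x ^ (j - ℓ) *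
                    antipode (R := k) (g ^ (r * K) * x ^ ℓ)) :=
              eq_neg_of_add_eq_zero_right h0
            have hSa : antipode (R := k) (g ^ (r * K) * x ^ j)
                = - ∑ ℓ ∈ Finset.range j, c ℓ • (g ^ (K * n - (r * K + K * j) % (K * n)) *
                    (g ^ (r * K + K * ℓ) * x ^ (j - ℓ) *
                      antipode (R := k) (g ^ (r * K) * x ^ ℓ))) := by
              calc antipode (R := k) (g ^ (r * K) * x ^ j)
                  = g ^ (K * n - (r * K + K * j) % (K * n)) * (g ^ (r * K + K * j) *
                    antipode (R := k) (g ^ (r * K) * x ^ j)) := by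
                    rw [← mul_assoc, hgt2, one_mul]
                _ = _ := by
                    rw [h1, mul_neg, Finset.mul_sum]
                    congr 1
                    exact Finset.sum_congr rfl fun ℓ _ => mul_smul_comm _ _ _
            rw [hSa]
            refine Submodule.neg_mem _ (Submodule.sum_mem _ fun ℓ hℓ => ?_)
            refine Submodule.smul_mem _ _ ?_
            rw [Finset.mem_range] at hℓ
            have hKt : K ∣ K * n - (r * K + K * j) % (K * n) :=
              Nat.dvd_sub (dvd_mul_right K n) ((Nat.dvd_mod_iff (dvd_mul_right K n)).mpr
                ((Dvd.intro_left r rfl).add (dvd_mul_right K j)))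
            obtain ⟨s, hs⟩ : K ∣ K * n - (r * K + K * j) % (K * n) + (r * K + K * ℓ) :=
              hKt.add ((Dvd.intro_left r rfl).add (dvd_mul_right K ℓ))
            have hmm : g ^ (K * n - (r * K + K * j) % (K * n)) *
                (g ^ (r * K + K * ℓ) * x ^ (j - ℓ) *
                  antipode (R := k) (g ^ (r * K) * x ^ ℓ))
                = (g ^ (s * K) * x ^ (j - ℓ)) * antipode (R := k) (g ^ (r * K) * x ^ ℓ) := by
              rw [← mul_assoc, ← mul_assoc, ← pow_add, hs, mul_comm K s, mul_assoc]
            rw [hmm]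
            exact hMmul s (j - ℓ) _ (ih ℓ hℓ r)
        · rw [hxz j (by omega), mul_zero, map_zero]
          exact zero_mem _
    rw [hrange]
    have haM : a ∈ M := hrange ▸ ha
    have hle : M ≤ Submodule.comap (antipode (R := k) (A := H)) M := by
      refine Submodule.span_le.mpr ?_
      rintro _ ⟨r, j, rfl⟩
      exact Submodule.mem_comap.mpr (hS (j : ℕ) (r : ℕ))
    exact hle haM
end
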